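/- arXiv:math/0502205 — 7 statements merged into one kernel-verified Lean document; each statement's English description precedes it below -/
import Mathlib

section
/- If F = {f_n} is a frame for a Hilbert space H with frame bounds A, B, and E = {e_n} is a sequence in H such that R := Σ_n ‖e_n − f_n‖² < A, then E is a frame for H with frame bounds A(1 − √(R/A))² and B(1 + √(R/B))². -/
lemma lp2_norm (x : lp (fun _ : ℤ => ℂ) 2) : ‖x‖ = Real.sqrt (∑' n, ‖x n‖ ^ 2) := by
  rw [lp.norm_eq_tsum_rpow (by norm_num) x, Real.sqrt_eq_rpow]
  norm_num

lemma mem_lp2 (a : ℤ → ℂ) (ha : Summable fun n => ‖a n‖ ^ 2) :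
    Memℓp a (2 : ENNReal) := by
  apply memℓp_gen
  have : (2 : ENNReal).toReal = ((2:ℕ) : ℝ) := by norm_num
  rw [this]
  simpa [Real.rpow_natCast] using ha

lemma sqrt_tsum_tri (a b : ℤ → ℂ) (ha : Summable fun n => ‖a n‖ ^ 2)
    (hb : Summable fun n => ‖b n‖ ^ 2) :
    Real.sqrt (∑' n, ‖a n + b n‖ ^ 2) ≤
      Real.sqrt (∑' n, ‖a n‖ ^ 2) + Real.sqrt (∑' n, ‖b n‖ ^ 2) ∧
    Real.sqrt (∑' n, ‖a n‖ ^ 2) - Real.sqrt (∑' n, ‖b n‖ ^ 2) ≤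
      Real.sqrt (∑' n, ‖a n + b n‖ ^ 2) := by
  set xa : lp (fun _ : ℤ => ℂ) 2 := ⟨a, mem_lp2 a ha⟩
  set xb : lp (fun _ : ℤ => ℂ) 2 := ⟨b, mem_lp2 b hb⟩
  have hab : ∀ n, (xa + xb) n = a n + b n := fun n => by rw [lp.coeFn_add]; rfl
  have h1 : Real.sqrt (∑' n, ‖a n + b n‖ ^ 2) = ‖xa + xb‖ := by
    rw [lp2_norm]; congr 1
  have h2 : Real.sqrt (∑' n, ‖a n‖ ^ 2) = ‖xa‖ := (lp2_norm xa).symm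
  have h3 : Real.sqrt (∑' n, ‖b n‖ ^ 2) = ‖xb‖ := (lp2_norm xb).symm
  rw [h1, h2, h3]
  constructor
  · exact norm_add_le xa xb
  · have := norm_sub_norm_le xa (-xb)
    simpa [sub_neg_eq_add] using this

/-- Christensen's quadratic perturbation theorem. -/
theorem stmt_0 {H : Type*} [NormedAddCommGroup H] [InnerProductSpace ℂ H] [CompleteSpace H]
    (F E : ℤ → H) (A B R : ℝ) (hA : 0 < A) (hAB : A ≤ B)
    (hframe : ∀ f : H,
      A * ‖f‖ ^ 2 ≤ ∑' n : ℤ, ‖(inner ℂ f (F n) : ℂ)‖ ^ 2 ∧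
      ∑' n : ℤ, ‖(inner ℂ f (F n) : ℂ)‖ ^ 2 ≤ B * ‖f‖ ^ 2)
    (hsum : Summable fun n : ℤ => ‖E n - F n‖ ^ 2)
    (hR : R = ∑' n : ℤ, ‖E n - F n‖ ^ 2) (hRA : R < A) :
    ∀ f : H,
      A * (1 - Real.sqrt (R / A)) ^ 2 * ‖f‖ ^ 2 ≤ ∑' n : ℤ, ‖(inner ℂ f (E n) : ℂ)‖ ^ 2 ∧
      ∑' n : ℤ, ‖(inner ℂ f (E n) : ℂ)‖ ^ 2 ≤ B * (1 + Real.sqrt (R / B)) ^ 2 * ‖f‖ ^ 2 := by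
  have hB : (0:ℝ) < B := lt_of_lt_of_le hA hAB
  have hR0 : 0 ≤ R := hR ▸ tsum_nonneg (fun n => by positivity)
  -- key sqrt identities
  have hsB : Real.sqrt B * (1 + Real.sqrt (R / B)) = Real.sqrt B + Real.sqrt R := by
    rw [mul_add, mul_one, ← Real.sqrt_mul hB.le, mul_div_cancel₀ _ hB.ne']
  have hsA : Real.sqrt A * (1 - Real.sqrt (R / A)) = Real.sqrt A - Real.sqrt R := by
    rw [mul_sub, mul_one, ← Real.sqrt_mul hA.le, mul_div_cancel₀ _ hA.ne']
  have hBid : B * (1 + Real.sqrt (R / B)) ^ 2 = (Real.sqrt B + Real.sqrt R) ^ 2 := by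
    rw [← hsB, mul_pow, Real.sq_sqrt hB.le]
  have hAid : A * (1 - Real.sqrt (R / A)) ^ 2 = (Real.sqrt A - Real.sqrt R) ^ 2 := by
    rw [← hsA, mul_pow, Real.sq_sqrt hA.le]
  have hAR : Real.sqrt R ≤ Real.sqrt A := Real.sqrt_le_sqrt hRA.le
  intro f
  rcases eq_or_ne f 0 with rfl | hf
  · simp only [inner_zero_left, norm_zero, zero_pow, tsum_zero, norm_zero]
    norm_num
  have hfn : (0:ℝ) < ‖f‖ := norm_pos_iff.mpr hf
  set a : ℤ → ℂ := fun n => inner ℂ f (F n) with ha_def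
  set b : ℤ → ℂ := fun n => inner ℂ f (E n - F n) with hb_def
  have hab : ∀ n, a n + b n = inner ℂ f (E n) := fun n => by
    rw [ha_def, hb_def]; simp [inner_sub_right]
  have ha : Summable fun n => ‖a n‖ ^ 2 := by
    by_contra h
    have h1 := (hframe f).1
    rw [tsum_eq_zero_of_not_summable h] at h1
    nlinarith [mul_pos hA (pow_pos hfn 2)]
  have hbdd : ∀ n, ‖b n‖ ^ 2 ≤ ‖f‖ ^ 2 * ‖E n - F n‖ ^ 2 := fun n => by
    have := norm_inner_le_norm (𝕜 := ℂ) f (E n - F n)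
    calc ‖b n‖ ^ 2 ≤ (‖f‖ * ‖E n - F n‖) ^ 2 := by
          apply pow_le_pow_left₀ (norm_nonneg _) this
      _ = ‖f‖ ^ 2 * ‖E n - F n‖ ^ 2 := by ring
  have hb : Summable fun n => ‖b n‖ ^ 2 :=
    Summable.of_nonneg_of_le (fun n => by positivity) hbdd (hsum.mul_left _)
  have hSb : (∑' n, ‖b n‖ ^ 2) ≤ R * ‖f‖ ^ 2 := by
    calc (∑' n, ‖b n‖ ^ 2) ≤ ∑' n, ‖f‖ ^ 2 * ‖E n - F n‖ ^ 2 :=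
          Summable.tsum_le_tsum hbdd hb (hsum.mul_left _)
      _ = ‖f‖ ^ 2 * ∑' n, ‖E n - F n‖ ^ 2 := tsum_mul_left
      _ = R * ‖f‖ ^ 2 := by rw [← hR]; ring
  have htri := sqrt_tsum_tri a b ha hb
  have hE : (∑' n, ‖a n + b n‖ ^ 2) = ∑' n : ℤ, ‖(inner ℂ f (E n) : ℂ)‖ ^ 2 :=
    tsum_congr fun n => by rw [hab]
  set Sc := ∑' n : ℤ, ‖(inner ℂ f (E n) : ℂ)‖ ^ 2 with hSc
  have hSc0 : 0 ≤ Sc := tsum_nonneg fun n => by positivity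
  have hSa0 : 0 ≤ ∑' n, ‖a n‖ ^ 2 := tsum_nonneg fun n => by positivity
  have hSb0 : 0 ≤ ∑' n, ‖b n‖ ^ 2 := tsum_nonneg fun n => by positivity
  rw [hE] at htri
  -- sqrt bounds
  have hsaU : Real.sqrt (∑' n, ‖a n‖ ^ 2) ≤ Real.sqrt B * ‖f‖ := by
    have := (hframe f).2
    calc Real.sqrt (∑' n, ‖a n‖ ^ 2) ≤ Real.sqrt (B * ‖f‖ ^ 2) := Real.sqrt_le_sqrt this
      _ = Real.sqrt B * ‖f‖ := by
          rw [Real.sqrt_mul hB.le, Real.sqrt_sq hfn.le]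
  have hsaL : Real.sqrt A * ‖f‖ ≤ Real.sqrt (∑' n, ‖a n‖ ^ 2) := by
    have := (hframe f).1
    calc Real.sqrt A * ‖f‖ = Real.sqrt (A * ‖f‖ ^ 2) := by
          rw [Real.sqrt_mul hA.le, Real.sqrt_sq hfn.le]
      _ ≤ _ := Real.sqrt_le_sqrt this
  have hsbU : Real.sqrt (∑' n, ‖b n‖ ^ 2) ≤ Real.sqrt R * ‖f‖ := by
    calc Real.sqrt (∑' n, ‖b n‖ ^ 2) ≤ Real.sqrt (R * ‖f‖ ^ 2) := Real.sqrt_le_sqrt hSb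
      _ = Real.sqrt R * ‖f‖ := by
          rw [Real.sqrt_mul hR0, Real.sqrt_sq hfn.le]
  constructor
  · -- lower bound
    rw [hAid]
    have hlow : (Real.sqrt A - Real.sqrt R) * ‖f‖ ≤ Real.sqrt Sc := by
      calc (Real.sqrt A - Real.sqrt R) * ‖f‖
          = Real.sqrt A * ‖f‖ - Real.sqrt R * ‖f‖ := by ring
        _ ≤ Real.sqrt (∑' n, ‖a n‖ ^ 2) - Real.sqrt (∑' n, ‖b n‖ ^ 2) := by
            exact sub_le_sub hsaL hsbU
        _ ≤ Real.sqrt Sc := htri.2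
    have hnn : 0 ≤ (Real.sqrt A - Real.sqrt R) * ‖f‖ := by
      apply mul_nonneg (by linarith) hfn.le
    calc (Real.sqrt A - Real.sqrt R) ^ 2 * ‖f‖ ^ 2
        = ((Real.sqrt A - Real.sqrt R) * ‖f‖) ^ 2 := by ring
      _ ≤ Real.sqrt Sc ^ 2 := pow_le_pow_left₀ hnn hlow 2
      _ = Sc := Real.sq_sqrt hSc0
  · -- upper bound
    rw [hBid]
    have hup : Real.sqrt Sc ≤ (Real.sqrt B + Real.sqrt R) * ‖f‖ := by
      calc Real.sqrt Sc ≤ Real.sqrt (∑' n, ‖a n‖ ^ 2) + Real.sqrt (∑' n, ‖b n‖ ^ 2) := htri.1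
        _ ≤ Real.sqrt B * ‖f‖ + Real.sqrt R * ‖f‖ := add_le_add hsaU hsbU
        _ = (Real.sqrt B + Real.sqrt R) * ‖f‖ := by ring
    calc Sc = Real.sqrt Sc ^ 2 := (Real.sq_sqrt hSc0).symm
      _ ≤ ((Real.sqrt B + Real.sqrt R) * ‖f‖) ^ 2 :=
          pow_le_pow_left₀ (Real.sqrt_nonneg _) hup 2
      _ = (Real.sqrt B + Real.sqrt R) ^ 2 * ‖f‖ ^ 2 := by ring
end

section
/- Let F = {f_n} be a frame for H with bounds A, B, and let E = {e_n} be a sequence in H. Suppose there exist constants λ, μ ≥ 0 with λ + μ/√A < 1 such that for every finite set F₀ ⊂ ℤ and scalars (c_n)_{n∈F₀}, ‖Σ_{n∈F₀} c_n (e_n − f_n)‖ ≤ λ‖Σ_{n∈F₀} c_n f_n‖ + μ(Σ_{n∈F₀} |c_n|²)^{1/2}. Then E is a frame for H with bounds A(1 − (λ + μ/√A))² and B(1 + λ + μ/√B)². -/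
open RCLike Finset

section Aux

variable {H : Type*} [NormedAddCommGroup H] [InnerProductSpace ℂ H]

private lemma aux_cs (s : Finset ℤ) (c : ℤ → ℂ) (V : ℤ → H) (g : H) :
    RCLike.re (inner ℂ g (∑ n ∈ s, c n • V n) : ℂ) ≤
      Real.sqrt (∑ n ∈ s, ‖c n‖ ^ 2) * Real.sqrt (∑ n ∈ s, ‖(inner ℂ g (V n) : ℂ)‖ ^ 2) := by
  have h1 : (inner ℂ g (∑ n ∈ s, c n • V n) : ℂ) = ∑ n ∈ s, c n * inner ℂ g (V n) := by
    simp [inner_sum, inner_smul_right]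
  rw [h1]
  calc RCLike.re (∑ n ∈ s, c n * (inner ℂ g (V n) : ℂ))
      ≤ ‖∑ n ∈ s, c n * (inner ℂ g (V n) : ℂ)‖ := RCLike.re_le_norm _
    _ ≤ ∑ n ∈ s, ‖c n * (inner ℂ g (V n) : ℂ)‖ := norm_sum_le _ _
    _ = ∑ n ∈ s, ‖c n‖ * ‖(inner ℂ g (V n) : ℂ)‖ := by simp [norm_mul]
    _ ≤ _ := Real.sum_mul_le_sqrt_mul_sqrt _ _ _

private lemma aux_mink (s : Finset ℤ) (u v : ℤ → ℂ) :
    Real.sqrt (∑ n ∈ s, ‖u n + v n‖ ^ 2) ≤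
      Real.sqrt (∑ n ∈ s, ‖u n‖ ^ 2) + Real.sqrt (∑ n ∈ s, ‖v n‖ ^ 2) := by
  have key : ∀ w : ℤ → ℂ,
      Real.sqrt (∑ n ∈ s, ‖w n‖ ^ 2) = ‖(EuclideanSpace.equiv s ℂ).symm (fun i : s => w i)‖ := by
    intro w
    rw [EuclideanSpace.norm_eq]
    congr 1
    rw [← Finset.sum_coe_sort s fun n => ‖w n‖ ^ 2]
    rfl
  rw [key u, key v, key (fun n => u n + v n)]
  have h : (EuclideanSpace.equiv s ℂ).symm (fun i : s => u i + v i)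
      = (EuclideanSpace.equiv s ℂ).symm (fun i : s => u i)
        + (EuclideanSpace.equiv s ℂ).symm (fun i : s => v i) := map_add _ _ _
  rw [h]
  exact norm_add_le _ _

end Aux

set_option maxHeartbeats 2000000 in
/-- Casazza–Christensen perturbation theorem. -/
theorem stmt_1 {H : Type*} [NormedAddCommGroup H] [InnerProductSpace ℂ H] [CompleteSpace H]
    (F E : ℤ → H) (A B lam mu : ℝ) (hA : 0 < A) (hAB : A ≤ B)
    (hframe : ∀ f : H,
      A * ‖f‖ ^ 2 ≤ ∑' n : ℤ, ‖(inner ℂ f (F n) : ℂ)‖ ^ 2 ∧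
      ∑' n : ℤ, ‖(inner ℂ f (F n) : ℂ)‖ ^ 2 ≤ B * ‖f‖ ^ 2)
    (hlam : 0 ≤ lam) (hmu : 0 ≤ mu) (hsmall : lam + mu / Real.sqrt A < 1)
    (hpert : ∀ (F₀ : Finset ℤ) (c : ℤ → ℂ),
      ‖∑ n ∈ F₀, c n • (E n - F n)‖ ≤
        lam * ‖∑ n ∈ F₀, c n • F n‖ + mu * Real.sqrt (∑ n ∈ F₀, ‖c n‖ ^ 2)) :
    ∀ f : H,
      A * (1 - (lam + mu / Real.sqrt A)) ^ 2 * ‖f‖ ^ 2 ≤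
        ∑' n : ℤ, ‖(inner ℂ f (E n) : ℂ)‖ ^ 2 ∧
      ∑' n : ℤ, ‖(inner ℂ f (E n) : ℂ)‖ ^ 2 ≤
        B * (1 + lam + mu / Real.sqrt B) ^ 2 * ‖f‖ ^ 2 := by
  intro f
  have hB : 0 < B := hA.trans_le hAB
  have hsA : 0 < Real.sqrt A := Real.sqrt_pos.2 hA
  have hsB : 0 < Real.sqrt B := Real.sqrt_pos.2 hB
  -- summability of the F-frame coefficients
  have hsumF : ∀ g : H, Summable fun n : ℤ => ‖(inner ℂ g (F n) : ℂ)‖ ^ 2 := by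
    intro g
    by_cases h : Summable fun n : ℤ => ‖(inner ℂ g (F n) : ℂ)‖ ^ 2
    · exact h
    · have h0 : ∑' n : ℤ, ‖(inner ℂ g (F n) : ℂ)‖ ^ 2 = 0 := tsum_eq_zero_of_not_summable h
      have h1 := (hframe g).1
      rw [h0] at h1
      have hg : g = 0 := by
        have h2 : ‖g‖ ^ 2 ≤ 0 := by nlinarith
        have h3 : ‖g‖ = 0 := by nlinarith [norm_nonneg g]
        simpa using h3
      subst hg
      simpa using summable_zero
  -- synthesis bound for F
  have L1 : ∀ (s : Finset ℤ) (c : ℤ → ℂ),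
      ‖∑ n ∈ s, c n • F n‖ ≤ Real.sqrt B * Real.sqrt (∑ n ∈ s, ‖c n‖ ^ 2) := by
    intro s c
    set g := ∑ n ∈ s, c n • F n with hg
    have h1 : ‖g‖ ^ 2 ≤
        Real.sqrt (∑ n ∈ s, ‖c n‖ ^ 2) * Real.sqrt (∑ n ∈ s, ‖(inner ℂ g (F n) : ℂ)‖ ^ 2) := by
      have h := aux_cs s c F g
      calc ‖g‖ ^ 2 = RCLike.re (inner ℂ g g : ℂ) := (inner_self_eq_norm_sq g).symm
        _ = RCLike.re (inner ℂ g (∑ n ∈ s, c n • F n) : ℂ) := by rw [← hg]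
        _ ≤ _ := h
    have h2 : Real.sqrt (∑ n ∈ s, ‖(inner ℂ g (F n) : ℂ)‖ ^ 2) ≤ Real.sqrt B * ‖g‖ := by
      have h3 : (∑ n ∈ s, ‖(inner ℂ g (F n) : ℂ)‖ ^ 2) ≤ B * ‖g‖ ^ 2 :=
        le_trans (Summable.sum_le_tsum s (fun i _ => by positivity) (hsumF g)) (hframe g).2
      calc Real.sqrt (∑ n ∈ s, ‖(inner ℂ g (F n) : ℂ)‖ ^ 2)
          ≤ Real.sqrt (B * ‖g‖ ^ 2) := Real.sqrt_le_sqrt h3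
        _ = Real.sqrt B * ‖g‖ := by
            rw [Real.sqrt_mul hB.le, Real.sqrt_sq (norm_nonneg g)]
    rcases eq_or_lt_of_le (norm_nonneg g) with h0 | h0
    · rw [← h0]; positivity
    · nlinarith [Real.sqrt_nonneg (∑ n ∈ s, ‖c n‖ ^ 2),
        mul_le_mul_of_nonneg_left h2 (Real.sqrt_nonneg (∑ n ∈ s, ‖c n‖ ^ 2))]
  -- synthesis bound for E
  have hC0 : 0 ≤ (1 + lam) * Real.sqrt B + mu := by nlinarith
  have hCE : ∀ (s : Finset ℤ) (c : ℤ → ℂ),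
      ‖∑ n ∈ s, c n • E n‖ ≤
        ((1 + lam) * Real.sqrt B + mu) * Real.sqrt (∑ n ∈ s, ‖c n‖ ^ 2) := by
    intro s c
    have hsplit : ∑ n ∈ s, c n • E n
        = (∑ n ∈ s, c n • F n) + ∑ n ∈ s, c n • (E n - F n) := by
      rw [← Finset.sum_add_distrib]
      refine Finset.sum_congr rfl fun n _ => ?_
      rw [smul_sub]; abel
    rw [hsplit]
    have h1 := hpert s c
    have h2 := L1 s c
    have h3 := norm_add_le (∑ n ∈ s, c n • F n) (∑ n ∈ s, c n • (E n - F n))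
    have h4 : (0:ℝ) ≤ Real.sqrt (∑ n ∈ s, ‖c n‖ ^ 2) := Real.sqrt_nonneg _
    nlinarith [mul_le_mul_of_nonneg_left h2 hlam]
  -- upper bound on partial sums for E
  have hupper : ∀ (g : H) (s : Finset ℤ),
      (∑ n ∈ s, ‖(inner ℂ g (E n) : ℂ)‖ ^ 2) ≤ (((1 + lam) * Real.sqrt B + mu) * ‖g‖) ^ 2 := by
    intro g s
    set S := ∑ n ∈ s, ‖(inner ℂ g (E n) : ℂ)‖ ^ 2 with hSdef
    have hS0 : 0 ≤ S := by positivity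
    set c : ℤ → ℂ := fun n => (inner ℂ (E n) g : ℂ) with hcdef
    have hcs : (∑ n ∈ s, ‖c n‖ ^ 2) = S := by
      rw [hSdef]
      refine Finset.sum_congr rfl fun n _ => ?_
      rw [hcdef]
      simp [norm_inner_symm]
    have h1 : RCLike.re (inner ℂ g (∑ n ∈ s, c n • E n) : ℂ) = S := by
      have h1a : (inner ℂ g (∑ n ∈ s, c n • E n) : ℂ)
          = ∑ n ∈ s, ((‖(inner ℂ g (E n) : ℂ)‖ ^ 2 : ℝ) : ℂ) := by
        rw [inner_sum]
        refine Finset.sum_congr rfl fun n _ => ?_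
        rw [inner_smul_right, hcdef]
        show (inner ℂ (E n) g : ℂ) * inner ℂ g (E n) = _
        rw [← inner_conj_symm (E n) g, mul_comm, Complex.mul_conj']
        push_cast
        ring
      rw [h1a, ← Complex.ofReal_sum]
      rw [hSdef]
      exact Complex.ofReal_re _
    have h2 : S ≤ ‖g‖ * (((1 + lam) * Real.sqrt B + mu) * Real.sqrt S) := by
      conv_lhs => rw [← h1]
      calc RCLike.re (inner ℂ g (∑ n ∈ s, c n • E n) : ℂ)
          ≤ ‖(inner ℂ g (∑ n ∈ s, c n • E n) : ℂ)‖ := RCLike.re_le_norm _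
        _ ≤ ‖g‖ * ‖∑ n ∈ s, c n • E n‖ := norm_inner_le_norm _ _
        _ ≤ _ := by
            have h := hCE s c
            rw [hcs] at h
            exact mul_le_mul_of_nonneg_left h (norm_nonneg g)
    have ht : Real.sqrt S ≤ ((1 + lam) * Real.sqrt B + mu) * ‖g‖ := by
      by_contra hcon
      push_neg at hcon
      nlinarith [Real.sq_sqrt hS0, Real.sqrt_nonneg S, mul_nonneg hC0 (norm_nonneg g)]
    calc S = Real.sqrt S ^ 2 := (Real.sq_sqrt hS0).symm
      _ ≤ (((1 + lam) * Real.sqrt B + mu) * ‖g‖) ^ 2 :=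
          pow_le_pow_left₀ (Real.sqrt_nonneg S) ht 2
  have hsumE : ∀ g : H, Summable fun n : ℤ => ‖(inner ℂ g (E n) : ℂ)‖ ^ 2 := by
    intro g
    exact summable_of_sum_le (fun n => by positivity) (hupper g)
  have htsumE : ∑' n : ℤ, ‖(inner ℂ f (E n) : ℂ)‖ ^ 2
      ≤ (((1 + lam) * Real.sqrt B + mu) * ‖f‖) ^ 2 :=
    Summable.tsum_le_of_sum_le (hsumE f) (hupper f)
  have hub : (((1 + lam) * Real.sqrt B + mu) * ‖f‖) ^ 2
      = B * (1 + lam + mu / Real.sqrt B) ^ 2 * ‖f‖ ^ 2 := by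
    have hCB : (1 + lam) * Real.sqrt B + mu = Real.sqrt B * (1 + lam + mu / Real.sqrt B) := by
      field_simp
    rw [hCB, mul_pow, mul_pow, Real.sq_sqrt hB.le]
  refine ⟨?_, by rw [← hub]; exact htsumE⟩
  -- LOWER BOUND
  rcases eq_or_ne f 0 with rfl | hf0
  · simpa using tsum_nonneg (fun n : ℤ => by positivity :
      ∀ n : ℤ, 0 ≤ ‖(inner ℂ (0 : H) (E n) : ℂ)‖ ^ 2)
  have hfpos : 0 < ‖f‖ := norm_pos_iff.2 hf0
  set r : ℝ := ‖f‖ ^ 2 / A with hrdef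
  have hr0 : 0 < r := by positivity
  have hsr : Real.sqrt r = ‖f‖ / Real.sqrt A := by
    rw [hrdef, Real.sqrt_div (by positivity), Real.sqrt_sq (norm_nonneg f)]
  set Kset : Set H := {h : H | ∃ s : Finset ℤ, ∃ c : ℤ → ℂ,
      (∑ n ∈ s, ‖c n‖ ^ 2) ≤ r ∧ h = ∑ n ∈ s, c n • F n} with hKdef
  have hzero : (0 : H) ∈ Kset := ⟨∅, 0, by simp [hr0.le], by simp⟩
  -- extension of coefficients to a larger support
  have hext : ∀ (s t : Finset ℤ) (c : ℤ → ℂ), s ⊆ t →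
      (∑ n ∈ t, (if n ∈ s then c n else 0) • F n = ∑ n ∈ s, c n • F n) ∧
      (∑ n ∈ t, ‖(if n ∈ s then c n else 0 : ℂ)‖ ^ 2 = ∑ n ∈ s, ‖c n‖ ^ 2) := by
    intro s t c hst
    constructor
    · rw [← Finset.sum_subset hst (fun x _ hx => by simp [hx])]
      exact Finset.sum_congr rfl fun n hn => by simp [hn]
    · rw [← Finset.sum_subset hst (fun x _ hx => by simp [hx])]
      exact Finset.sum_congr rfl fun n hn => by simp [hn]
  have hsqnorm : ∀ (t : Finset ℤ) (a : ℝ) (w : ℤ → ℂ),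
      ∑ n ∈ t, ‖(a : ℂ) * w n‖ ^ 2 = a ^ 2 * ∑ n ∈ t, ‖w n‖ ^ 2 := by
    intro t a w
    rw [Finset.mul_sum]
    refine Finset.sum_congr rfl fun n _ => ?_
    rw [norm_mul, mul_pow, Complex.norm_real, Real.norm_eq_abs, sq_abs]
  have hconv : Convex ℝ Kset := by
    rintro x ⟨s1, c1, hc1, rfl⟩ y ⟨s2, c2, hc2, rfl⟩ a b ha hb hab
    set c1' : ℤ → ℂ := fun n => if n ∈ s1 then c1 n else 0 with hc1'def
    set c2' : ℤ → ℂ := fun n => if n ∈ s2 then c2 n else 0 with hc2'def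
    refine ⟨s1 ∪ s2, fun n => (a : ℂ) * c1' n + (b : ℂ) * c2' n, ?_, ?_⟩
    · have hnn : (0:ℝ) ≤ ∑ n ∈ s1 ∪ s2, ‖(a : ℂ) * c1' n + (b : ℂ) * c2' n‖ ^ 2 := by
        positivity
      have m1 := aux_mink (s1 ∪ s2) (fun n => (a : ℂ) * c1' n) (fun n => (b : ℂ) * c2' n)
      have e1 : Real.sqrt (∑ n ∈ s1 ∪ s2, ‖(a : ℂ) * c1' n‖ ^ 2) ≤ a * Real.sqrt r := by
        rw [hsqnorm, (hext s1 (s1 ∪ s2) c1 Finset.subset_union_left).2,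
          Real.sqrt_mul (sq_nonneg a), Real.sqrt_sq ha]
        exact mul_le_mul_of_nonneg_left (Real.sqrt_le_sqrt hc1) ha
      have e2 : Real.sqrt (∑ n ∈ s1 ∪ s2, ‖(b : ℂ) * c2' n‖ ^ 2) ≤ b * Real.sqrt r := by
        rw [hsqnorm, (hext s2 (s1 ∪ s2) c2 Finset.subset_union_right).2,
          Real.sqrt_mul (sq_nonneg b), Real.sqrt_sq hb]
        exact mul_le_mul_of_nonneg_left (Real.sqrt_le_sqrt hc2) hb
      have m2 : Real.sqrt (∑ n ∈ s1 ∪ s2, ‖(a : ℂ) * c1' n + (b : ℂ) * c2' n‖ ^ 2)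
          ≤ Real.sqrt r := by
        calc Real.sqrt (∑ n ∈ s1 ∪ s2, ‖(a : ℂ) * c1' n + (b : ℂ) * c2' n‖ ^ 2)
            ≤ _ + _ := m1
          _ ≤ a * Real.sqrt r + b * Real.sqrt r := add_le_add e1 e2
          _ = Real.sqrt r := by rw [← add_mul, hab, one_mul]
      have := mul_self_le_mul_self (Real.sqrt_nonneg _) m2
      rwa [Real.mul_self_sqrt hnn, Real.mul_self_sqrt hr0.le] at this
    · have ha' : ∀ z : H, (a : ℂ) • z = a • z := fun z => rfl
      have hb' : ∀ z : H, (b : ℂ) • z = b • z := fun z => rfl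
      rw [← (hext s1 (s1 ∪ s2) c1 Finset.subset_union_left).1,
        ← (hext s2 (s1 ∪ s2) c2 Finset.subset_union_right).1,
        ← ha' , ← hb', Finset.smul_sum, Finset.smul_sum, ← Finset.sum_add_distrib]
      refine Finset.sum_congr rfl fun n _ => ?_
      rw [smul_smul, smul_smul, ← add_smul]
  -- f lies in the closure of Kset
  have hfK : f ∈ closure Kset := by
    by_contra hfK
    letI : InnerProductSpace ℝ H := InnerProductSpace.rclikeToReal ℂ H
    have hKc : Convex ℝ (closure Kset) := hconv.closure
    obtain ⟨v, hvK, hv⟩ := exists_norm_eq_iInf_of_complete_convex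
      ⟨0, subset_closure hzero⟩ isClosed_closure.isComplete hKc f
    have hsep := (norm_eq_iInf_iff_real_inner_le_zero hKc hvK).1 hv
    set g := f - v with hgdef
    have hg0 : g ≠ 0 := by
      intro h
      exact hfK (by rw [show f = v from by rw [← sub_eq_zero]; exact h]; exact hvK)
    have hgpos : 0 < ‖g‖ := norm_pos_iff.2 hg0
    have hsep' : ∀ w ∈ Kset, RCLike.re (inner ℂ g w : ℂ)
        ≤ RCLike.re (inner ℂ g f : ℂ) - ‖g‖ ^ 2 := by
      intro w hw
      have h1 : (inner ℝ g (w - v) : ℝ) ≤ 0 := hsep w (subset_closure hw)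
      have h2 : (inner ℝ g (w - v) : ℝ) = RCLike.re (inner ℂ g (w - v) : ℂ) :=
        real_inner_eq_re_inner ℂ g (w - v)
      have h3 : (inner ℂ g (w - v) : ℂ) = inner ℂ g w - inner ℂ g v := inner_sub_right g w v
      have h4 : (inner ℂ g v : ℂ) = inner ℂ g f - inner ℂ g g := by
        rw [show v = f - g from by rw [hgdef]; abel, inner_sub_right]
      have h5 : RCLike.re (inner ℂ g g : ℂ) = ‖g‖ ^ 2 := inner_self_eq_norm_sq g
      rw [h2, h3, map_sub, h4, map_sub, h5] at h1
      linarith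
    set X : ℝ := RCLike.re (inner ℂ g f : ℂ) - ‖g‖ ^ 2 with hXdef
    have key : ∀ ε : ℝ, 0 < ε → ε ≤ A * ‖g‖ ^ 2 →
        Real.sqrt r * Real.sqrt (A * ‖g‖ ^ 2 - ε) ≤ X := by
      intro ε hε hεA
      have hAg : A * ‖g‖ ^ 2 - ε < ∑' n : ℤ, ‖(inner ℂ g (F n) : ℂ)‖ ^ 2 :=
        lt_of_lt_of_le (by linarith) (hframe g).1
      have hev : ∀ᶠ s : Finset ℤ in Filter.atTop,
          A * ‖g‖ ^ 2 - ε < ∑ n ∈ s, ‖(inner ℂ g (F n) : ℂ)‖ ^ 2 :=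
        (hsumF g).hasSum.eventually (eventually_gt_nhds hAg)
      obtain ⟨s, hs⟩ := hev.exists
      set S := ∑ n ∈ s, ‖(inner ℂ g (F n) : ℂ)‖ ^ 2 with hSdef
      have hS0 : 0 < S := lt_of_le_of_lt (by linarith) hs
      set t : ℝ := Real.sqrt r / Real.sqrt S with htdef
      have ht0 : 0 ≤ t := by positivity
      set c : ℤ → ℂ := fun n => (t : ℂ) * (inner ℂ (F n) g : ℂ) with hcdef
      have hcsum : ∑ n ∈ s, ‖c n‖ ^ 2 = r := by
        have e1 : ∑ n ∈ s, ‖c n‖ ^ 2 = t ^ 2 * ∑ n ∈ s, ‖(inner ℂ (F n) g : ℂ)‖ ^ 2 :=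
          hsqnorm s t _
        have e2 : ∑ n ∈ s, ‖(inner ℂ (F n) g : ℂ)‖ ^ 2 = S := by
          rw [hSdef]
          exact Finset.sum_congr rfl fun n _ => by rw [norm_inner_symm]
        rw [e1, e2, htdef, div_pow, Real.sq_sqrt hr0.le, Real.sq_sqrt hS0.le,
          div_mul_cancel₀ _ (ne_of_gt hS0)]
      have hwK : (∑ n ∈ s, c n • F n) ∈ Kset := ⟨s, c, le_of_eq hcsum, rfl⟩
      have hre : RCLike.re (inner ℂ g (∑ n ∈ s, c n • F n) : ℂ) = t * S := by
        have h1 : (inner ℂ g (∑ n ∈ s, c n • F n) : ℂ)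
            = ∑ n ∈ s, ((t * ‖(inner ℂ g (F n) : ℂ)‖ ^ 2 : ℝ) : ℂ) := by
          rw [inner_sum]
          refine Finset.sum_congr rfl fun n _ => ?_
          rw [inner_smul_right, hcdef]
          show (t : ℂ) * (inner ℂ (F n) g : ℂ) * (inner ℂ g (F n) : ℂ) = _
          rw [mul_assoc, ← inner_conj_symm (F n) g, mul_comm (starRingEnd ℂ _) _,
            Complex.mul_conj']
          push_cast
          ring
        rw [h1, ← Complex.ofReal_sum]
        rw [show ∑ n ∈ s, t * ‖(inner ℂ g (F n) : ℂ)‖ ^ 2 = t * S by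
          rw [hSdef, Finset.mul_sum]]
        exact Complex.ofReal_re _
      have h6 : t * S ≤ X := by rw [← hre]; exact hsep' _ hwK
      have h7 : t * S = Real.sqrt r * Real.sqrt S := by
        rw [htdef, div_mul_eq_mul_div, mul_div_assoc, Real.div_sqrt]
      have h8 : Real.sqrt (A * ‖g‖ ^ 2 - ε) ≤ Real.sqrt S := Real.sqrt_le_sqrt hs.le
      calc Real.sqrt r * Real.sqrt (A * ‖g‖ ^ 2 - ε)
          ≤ Real.sqrt r * Real.sqrt S := mul_le_mul_of_nonneg_left h8 (Real.sqrt_nonneg r)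
        _ = t * S := h7.symm
        _ ≤ X := h6
    have hX0 : 0 ≤ X := by
      have h := key (A * ‖g‖ ^ 2 / 2) (by positivity) (by nlinarith)
      exact le_trans (by positivity) h
    have hXle : X + ‖g‖ ^ 2 ≤ ‖g‖ * ‖f‖ := by
      have h1 : RCLike.re (inner ℂ g f : ℂ) ≤ ‖(inner ℂ g f : ℂ)‖ := RCLike.re_le_norm _
      have h2 : ‖(inner ℂ g f : ℂ)‖ ≤ ‖g‖ * ‖f‖ := norm_inner_le_norm g f
      rw [hXdef]
      linarith
    have hfin : r * (A * ‖g‖ ^ 2) ≤ X ^ 2 := by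
      refine le_of_forall_pos_le_add fun ε hε => ?_
      rcases le_or_gt (ε / r) (A * ‖g‖ ^ 2) with h | h
      · have hk := key (ε / r) (by positivity) h
        have h2 := mul_self_le_mul_self (by positivity) hk
        rw [show Real.sqrt r * Real.sqrt (A * ‖g‖ ^ 2 - ε / r)
              * (Real.sqrt r * Real.sqrt (A * ‖g‖ ^ 2 - ε / r))
            = (Real.sqrt r * Real.sqrt r) * (Real.sqrt (A * ‖g‖ ^ 2 - ε / r)
              * Real.sqrt (A * ‖g‖ ^ 2 - ε / r)) from by ring,
          Real.mul_self_sqrt hr0.le,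
          Real.mul_self_sqrt (by linarith : (0:ℝ) ≤ A * ‖g‖ ^ 2 - ε / r)] at h2
        have h3 : r * (A * ‖g‖ ^ 2 - ε / r) = r * (A * ‖g‖ ^ 2) - ε := by
          field_simp
        nlinarith [sq_nonneg X]
      · have : r * (A * ‖g‖ ^ 2) < ε := by
          have := mul_lt_mul_of_pos_left h hr0
          rwa [mul_div_cancel₀ _ (ne_of_gt hr0)] at this
        nlinarith [sq_nonneg X]
    have hrA : r * (A * ‖g‖ ^ 2) = (‖f‖ * ‖g‖) ^ 2 := by
      rw [hrdef]
      field_simp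
    have h9 := mul_self_le_mul_self (by positivity) hXle
    nlinarith [hfin, hrA, h9, hgpos, hfpos, sq_nonneg ‖g‖, hX0, pow_pos hgpos 4,
      mul_nonneg hX0 (sq_nonneg ‖g‖)]
  -- final assembly of the lower bound
  have hT0 : (0:ℝ) ≤ ∑' n : ℤ, ‖(inner ℂ f (E n) : ℂ)‖ ^ 2 :=
    tsum_nonneg fun n => by positivity
  set T := ∑' n : ℤ, ‖(inner ℂ f (E n) : ℂ)‖ ^ 2 with hTdef
  have hstep : ∀ ε : ℝ, 0 < ε → ‖f‖ ^ 2 ≤ (‖f‖ / Real.sqrt A) * Real.sqrt T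
      + (lam + mu / Real.sqrt A) * ‖f‖ ^ 2 + ε * ((1 + lam) * ‖f‖) := by
    intro ε hε
    obtain ⟨w, hw, hdist⟩ := Metric.mem_closure_iff.1 hfK ε hε
    obtain ⟨s, c, hc, rfl⟩ := hw
    have hsc : Real.sqrt (∑ n ∈ s, ‖c n‖ ^ 2) ≤ ‖f‖ / Real.sqrt A := by
      rw [← hsr]; exact Real.sqrt_le_sqrt hc
    have hdist' : ‖f - ∑ n ∈ s, c n • F n‖ < ε := by
      rw [← dist_eq_norm]; exact hdist
    have hwnorm : ‖∑ n ∈ s, c n • F n‖ ≤ ‖f‖ + ε := by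
      have hh := norm_sub_norm_le (∑ n ∈ s, c n • F n) f
      rw [← norm_sub_rev] at hh
      linarith
    have hEF : ‖f - ∑ n ∈ s, c n • E n‖
        ≤ ε + lam * (‖f‖ + ε) + mu * (‖f‖ / Real.sqrt A) := by
      have h1 : f - ∑ n ∈ s, c n • E n
          = (f - ∑ n ∈ s, c n • F n) - ∑ n ∈ s, c n • (E n - F n) := by
        rw [show ∑ n ∈ s, c n • (E n - F n)
            = ∑ n ∈ s, c n • E n - ∑ n ∈ s, c n • F n from by
          rw [← Finset.sum_sub_distrib]
          exact Finset.sum_congr rfl fun n _ => smul_sub _ _ _]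
        abel
      rw [h1]
      have h2 := hpert s c
      have h3 := norm_sub_le (f - ∑ n ∈ s, c n • F n) (∑ n ∈ s, c n • (E n - F n))
      have h4 : lam * ‖∑ n ∈ s, c n • F n‖ ≤ lam * (‖f‖ + ε) :=
        mul_le_mul_of_nonneg_left hwnorm hlam
      have h5 : mu * Real.sqrt (∑ n ∈ s, ‖c n‖ ^ 2) ≤ mu * (‖f‖ / Real.sqrt A) :=
        mul_le_mul_of_nonneg_left hsc hmu
      linarith
    have h2 : ‖f‖ ^ 2 = RCLike.re (inner ℂ f (∑ n ∈ s, c n • E n) : ℂ)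
        + RCLike.re (inner ℂ f (f - ∑ n ∈ s, c n • E n) : ℂ) := by
      have h2a : (inner ℂ f (∑ n ∈ s, c n • E n) : ℂ)
          + inner ℂ f (f - ∑ n ∈ s, c n • E n) = inner ℂ f f := by
        rw [← inner_add_right]
        congr 1
        abel
      calc ‖f‖ ^ 2 = RCLike.re (inner ℂ f f : ℂ) := (inner_self_eq_norm_sq f).symm
        _ = _ := by rw [← h2a, map_add]
    have h3 : RCLike.re (inner ℂ f (∑ n ∈ s, c n • E n) : ℂ)
        ≤ (‖f‖ / Real.sqrt A) * Real.sqrt T := by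
      calc RCLike.re (inner ℂ f (∑ n ∈ s, c n • E n) : ℂ)
          ≤ Real.sqrt (∑ n ∈ s, ‖c n‖ ^ 2)
            * Real.sqrt (∑ n ∈ s, ‖(inner ℂ f (E n) : ℂ)‖ ^ 2) := aux_cs s c E f
        _ ≤ (‖f‖ / Real.sqrt A) * Real.sqrt T := by
            refine mul_le_mul hsc (Real.sqrt_le_sqrt ?_) (Real.sqrt_nonneg _) (by positivity)
            exact Summable.sum_le_tsum s (fun i _ => by positivity) (hsumE f)
    have h4 : RCLike.re (inner ℂ f (f - ∑ n ∈ s, c n • E n) : ℂ)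
        ≤ ‖f‖ * (ε + lam * (‖f‖ + ε) + mu * (‖f‖ / Real.sqrt A)) := by
      calc RCLike.re (inner ℂ f (f - ∑ n ∈ s, c n • E n) : ℂ)
          ≤ ‖(inner ℂ f (f - ∑ n ∈ s, c n • E n) : ℂ)‖ := RCLike.re_le_norm _
        _ ≤ ‖f‖ * ‖f - ∑ n ∈ s, c n • E n‖ := norm_inner_le_norm _ _
        _ ≤ _ := mul_le_mul_of_nonneg_left hEF (norm_nonneg f)
    have hexp : ‖f‖ * (ε + lam * (‖f‖ + ε) + mu * (‖f‖ / Real.sqrt A))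
        = (lam + mu / Real.sqrt A) * ‖f‖ ^ 2 + ε * ((1 + lam) * ‖f‖) := by
      field_simp
      ring
    linarith [h2, h3, h4, hexp]
  have hkey : ‖f‖ ^ 2 ≤ (‖f‖ / Real.sqrt A) * Real.sqrt T
      + (lam + mu / Real.sqrt A) * ‖f‖ ^ 2 := by
    refine le_of_forall_pos_le_add fun ε hε => ?_
    have hpos : 0 < (1 + lam) * ‖f‖ := by positivity
    have h := hstep (ε / ((1 + lam) * ‖f‖)) (by positivity)
    rwa [div_mul_cancel₀ _ (ne_of_gt hpos)] at h
  have hθ : (0:ℝ) < 1 - (lam + mu / Real.sqrt A) := by linarith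
  have hkey2 : Real.sqrt A * (1 - (lam + mu / Real.sqrt A)) * ‖f‖ ^ 2 ≤ ‖f‖ * Real.sqrt T := by
    have h := mul_le_mul_of_nonneg_left hkey hsA.le
    have e : Real.sqrt A * ((‖f‖ / Real.sqrt A) * Real.sqrt T) = ‖f‖ * Real.sqrt T := by
      field_simp
    nlinarith [h, e]
  have h5 : Real.sqrt A * (1 - (lam + mu / Real.sqrt A)) * ‖f‖ ≤ Real.sqrt T := by
    nlinarith [hkey2, hfpos]
  have h6 := mul_self_le_mul_self
    (mul_nonneg (mul_nonneg hsA.le hθ.le) (norm_nonneg f)) h5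
  calc A * (1 - (lam + mu / Real.sqrt A)) ^ 2 * ‖f‖ ^ 2
      = (Real.sqrt A * (1 - (lam + mu / Real.sqrt A)) * ‖f‖)
        * (Real.sqrt A * (1 - (lam + mu / Real.sqrt A)) * ‖f‖) := by
        have hAs : Real.sqrt A * Real.sqrt A = A := Real.mul_self_sqrt hA.le
        linear_combination (-((1 - (lam + mu / Real.sqrt A)) ^ 2 * ‖f‖ ^ 2)) * hAs
    _ ≤ Real.sqrt T * Real.sqrt T := h6
    _ = T := Real.mul_self_sqrt hT0
end

section
/- The weighted Schur algebra A¹_s (matrices A = (a_{kl}) with ‖A‖ := max{sup_k Σ_l |a_{kl}|(1+|k−l|)^s, sup_l Σ_k |a_{kl}|(1+|k−l|)^s} < ∞, s ≥ 0) is closed under matrix multiplication, with ‖AB‖_{A¹_s} ≤ C‖A‖_{A¹_s}‖B‖_{A¹_s} for some constant C depending only on s. -/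
/-- The weight `v_s(k-l) = (1+|k-l|)^s`. -/
noncomputable def schurWeight (s : ℝ) (k l : ℤ) : ℝ := ((1 + |k - l| : ℤ) : ℝ) ^ s

lemma schurWeight_symm (s : ℝ) (k l : ℤ) : schurWeight s k l = schurWeight s l k := by
  unfold schurWeight; rw [abs_sub_comm]

lemma one_le_schurWeight (s : ℝ) (hs : 0 ≤ s) (k l : ℤ) : 1 ≤ schurWeight s k l := by
  unfold schurWeight
  apply Real.one_le_rpow ?_ hs
  have : (0:ℝ) ≤ |(k:ℝ) - l| := abs_nonneg _
  push_cast; linarith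

lemma schurWeight_nonneg (s : ℝ) (hs : 0 ≤ s) (k l : ℤ) : 0 ≤ schurWeight s k l :=
  le_trans zero_le_one (one_le_schurWeight s hs k l)

lemma schurWeight_submul (s : ℝ) (hs : 0 ≤ s) (k m l : ℤ) :
    schurWeight s k l ≤ schurWeight s k m * schurWeight s m l := by
  unfold schurWeight
  have h2 : (0:ℤ) ≤ |k-m| := abs_nonneg _
  have h3 : (0:ℤ) ≤ |m-l| := abs_nonneg _
  rw [← Real.mul_rpow (by push_cast; positivity) (by push_cast; positivity)]
  apply Real.rpow_le_rpow (by push_cast; positivity) ?_ hs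
  have h1 : |k - l| ≤ |k - m| + |m - l| := abs_sub_le k m l
  have hZ : (1 + |k - l| : ℤ) ≤ (1 + |k - m|) * (1 + |m - l|) := by nlinarith [mul_nonneg h2 h3]
  exact_mod_cast hZ

set_option maxHeartbeats 1000000 in
lemma schur_row (s : ℝ) (hs : 0 ≤ s) (a b : ℤ → ℤ → ℂ) (Na Nb : ℝ)
    (haR : ∀ k : ℤ, Summable (fun l : ℤ => ‖a k l‖ * schurWeight s k l) ∧
      ∑' l : ℤ, ‖a k l‖ * schurWeight s k l ≤ Na)
    (hbC : ∀ l : ℤ, Summable (fun k : ℤ => ‖b k l‖ * schurWeight s k l) ∧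
      ∑' k : ℤ, ‖b k l‖ * schurWeight s k l ≤ Nb)
    (hbR : ∀ k : ℤ, Summable (fun l : ℤ => ‖b k l‖ * schurWeight s k l) ∧
      ∑' l : ℤ, ‖b k l‖ * schurWeight s k l ≤ Nb)
    (k : ℤ) :
    Summable (fun l : ℤ => ‖∑' m : ℤ, a k m * b m l‖ * schurWeight s k l) ∧
    ∑' l : ℤ, ‖∑' m : ℤ, a k m * b m l‖ * schurWeight s k l ≤ Na * Nb := by
  have hNb : 0 ≤ Nb := le_trans (tsum_nonneg (fun l => mul_nonneg (norm_nonneg _)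
      (schurWeight_nonneg s hs _ _))) (hbR 0).2
  -- entrywise bound on b
  have hent : ∀ m l : ℤ, ‖b m l‖ ≤ Nb := by
    intro m l
    calc ‖b m l‖ ≤ ‖b m l‖ * schurWeight s m l := by
          nlinarith [one_le_schurWeight s hs m l, norm_nonneg (b m l)]
      _ ≤ ∑' k : ℤ, ‖b k l‖ * schurWeight s k l :=
          Summable.le_tsum (hbC l).1 m (fun j _ => mul_nonneg (norm_nonneg _) (schurWeight_nonneg s hs _ _))
      _ ≤ Nb := (hbC l).2
  set F : ℤ × ℤ → ℝ := fun p => (‖a k p.1‖ * schurWeight s k p.1) *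
      (‖b p.1 p.2‖ * schurWeight s p.1 p.2) with hFdef
  have hFnn : ∀ p, 0 ≤ F p := fun p => mul_nonneg
    (mul_nonneg (norm_nonneg _) (schurWeight_nonneg s hs _ _))
    (mul_nonneg (norm_nonneg _) (schurWeight_nonneg s hs _ _))
  have hFfib : ∀ m : ℤ, Summable (fun l => F (m, l)) := by
    intro m; simp only [hFdef]; exact (hbR m).1.mul_left _
  have hFfibsum : ∀ m : ℤ, ∑' l, F (m, l)
      = (‖a k m‖ * schurWeight s k m) * ∑' l, ‖b m l‖ * schurWeight s m l := by
    intro m; simp only [hFdef]; exact tsum_mul_left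
  have hFsum : Summable (fun m : ℤ => ∑' l, F (m, l)) := by
    apply Summable.of_nonneg_of_le (fun m => tsum_nonneg (fun l => hFnn (m, l)))
      (fun m => ?_) ((haR k).1.mul_right Nb)
    rw [hFfibsum m]
    exact mul_le_mul_of_nonneg_left (hbR m).2
      (mul_nonneg (norm_nonneg _) (schurWeight_nonneg s hs _ _))
  have hF : Summable F := (summable_prod_of_nonneg hFnn).mpr ⟨hFfib, hFsum⟩
  have hFswap : Summable (fun p : ℤ × ℤ => F (p.2, p.1)) := by
    have := ((Equiv.prodComm ℤ ℤ).summable_iff (f := F)).mpr hF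
    exact this
  have hFcolfib : ∀ l : ℤ, Summable (fun m => F (m, l)) := fun l => hFswap.prod_factor l
  have hg : Summable (fun l : ℤ => ∑' m, F (m, l)) :=
    ((summable_prod_of_nonneg (fun p => hFnn (p.2, p.1))).mp hFswap).2
  -- pointwise bound
  have hnorm : ∀ l : ℤ, Summable (fun m : ℤ => ‖a k m * b m l‖) := by
    intro l
    apply Summable.of_nonneg_of_le (fun m => norm_nonneg _) (fun m => ?_) ((haR k).1.mul_right Nb)
    rw [norm_mul]
    calc ‖a k m‖ * ‖b m l‖ ≤ ‖a k m‖ * Nb :=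
          mul_le_mul_of_nonneg_left (hent m l) (norm_nonneg _)
      _ = ‖a k m‖ * 1 * Nb := by ring
      _ ≤ ‖a k m‖ * schurWeight s k m * Nb := by
          have h1 := one_le_schurWeight s hs k m
          have h2 := norm_nonneg (a k m)
          nlinarith [mul_nonneg h2 hNb]
  have hpt : ∀ l : ℤ, ‖∑' m : ℤ, a k m * b m l‖ * schurWeight s k l ≤ ∑' m, F (m, l) := by
    intro l
    calc ‖∑' m : ℤ, a k m * b m l‖ * schurWeight s k l
        ≤ (∑' m : ℤ, ‖a k m * b m l‖) * schurWeight s k l :=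
          mul_le_mul_of_nonneg_right (norm_tsum_le_tsum_norm (hnorm l))
            (schurWeight_nonneg s hs _ _)
      _ = ∑' m : ℤ, ‖a k m * b m l‖ * schurWeight s k l := tsum_mul_right.symm
      _ ≤ ∑' m, F (m, l) := by
          apply Summable.tsum_le_tsum (fun m => ?_) ((hnorm l).mul_right _) (hFcolfib l)
          rw [norm_mul, hFdef]
          have h1 := schurWeight_submul s hs k m l
          have h2 : ‖a k m‖ * ‖b m l‖ * schurWeight s k l
              ≤ ‖a k m‖ * ‖b m l‖ * (schurWeight s k m * schurWeight s m l) :=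
            mul_le_mul_of_nonneg_left h1
              (mul_nonneg (norm_nonneg _) (norm_nonneg _))
          calc ‖a k m‖ * ‖b m l‖ * schurWeight s k l
              ≤ ‖a k m‖ * ‖b m l‖ * (schurWeight s k m * schurWeight s m l) := h2
            _ = ‖a k m‖ * schurWeight s k m * (‖b m l‖ * schurWeight s m l) := by ring
  have hsum : Summable (fun l : ℤ => ‖∑' m : ℤ, a k m * b m l‖ * schurWeight s k l) :=
    Summable.of_nonneg_of_le
      (fun l => mul_nonneg (norm_nonneg _) (schurWeight_nonneg s hs _ _)) hpt hg
  refine ⟨hsum, ?_⟩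
  calc ∑' l : ℤ, ‖∑' m : ℤ, a k m * b m l‖ * schurWeight s k l
      ≤ ∑' l, ∑' m, F (m, l) := Summable.tsum_le_tsum hpt hsum hg
    _ = ∑' m, ∑' l, F (m, l) := by
        exact Summable.tsum_comm' hF hFfib hFcolfib
    _ ≤ ∑' m : ℤ, (‖a k m‖ * schurWeight s k m) * Nb := by
        apply Summable.tsum_le_tsum (fun m => ?_) hFsum ((haR k).1.mul_right Nb)
        rw [hFfibsum m]
        exact mul_le_mul_of_nonneg_left (hbR m).2
          (mul_nonneg (norm_nonneg _) (schurWeight_nonneg s hs _ _))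
    _ = (∑' m : ℤ, ‖a k m‖ * schurWeight s k m) * Nb := tsum_mul_right
    _ ≤ Na * Nb := mul_le_mul_of_nonneg_right (haR k).2 hNb

/-- The weighted Schur algebra `A¹_s` is closed under matrix multiplication, with a
multiplicative constant depending only on `s`. -/
theorem stmt_6 (s : ℝ) (hs : 0 ≤ s) :
    ∃ C : ℝ, 0 < C ∧
      ∀ (a b : ℤ → ℤ → ℂ) (Na Nb : ℝ),
        (∀ k : ℤ, Summable (fun l : ℤ => ‖a k l‖ * schurWeight s k l) ∧
          ∑' l : ℤ, ‖a k l‖ * schurWeight s k l ≤ Na) →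
        (∀ l : ℤ, Summable (fun k : ℤ => ‖a k l‖ * schurWeight s k l) ∧
          ∑' k : ℤ, ‖a k l‖ * schurWeight s k l ≤ Na) →
        (∀ k : ℤ, Summable (fun l : ℤ => ‖b k l‖ * schurWeight s k l) ∧
          ∑' l : ℤ, ‖b k l‖ * schurWeight s k l ≤ Nb) →
        (∀ l : ℤ, Summable (fun k : ℤ => ‖b k l‖ * schurWeight s k l) ∧
          ∑' k : ℤ, ‖b k l‖ * schurWeight s k l ≤ Nb) →
        (∀ k : ℤ, Summable (fun l : ℤ => ‖∑' m : ℤ, a k m * b m l‖ * schurWeight s k l) ∧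
          ∑' l : ℤ, ‖∑' m : ℤ, a k m * b m l‖ * schurWeight s k l ≤ C * Na * Nb) ∧
        (∀ l : ℤ, Summable (fun k : ℤ => ‖∑' m : ℤ, a k m * b m l‖ * schurWeight s k l) ∧
          ∑' k : ℤ, ‖∑' m : ℤ, a k m * b m l‖ * schurWeight s k l ≤ C * Na * Nb) := by
  refine ⟨1, one_pos, fun a b Na Nb haR haC hbR hbC => ?_⟩
  constructor
  · intro k
    have h := schur_row s hs a b Na Nb haR hbC hbR k
    refine ⟨h.1, ?_⟩
    calc ∑' l : ℤ, ‖∑' m : ℤ, a k m * b m l‖ * schurWeight s k l ≤ Na * Nb := h.2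
      _ = 1 * Na * Nb := by ring
  · intro l
    -- transpose trick: apply schur_row to bᵀ, aᵀ
    have hbRT : ∀ K : ℤ, Summable (fun L : ℤ => ‖b L K‖ * schurWeight s K L) ∧
        ∑' L : ℤ, ‖b L K‖ * schurWeight s K L ≤ Nb := by
      intro K
      have h := hbC K
      have he : (fun L : ℤ => ‖b L K‖ * schurWeight s K L)
          = fun L : ℤ => ‖b L K‖ * schurWeight s L K := by
        funext L; rw [schurWeight_symm]
      rw [he]; exact h
    have haCT : ∀ L : ℤ, Summable (fun K : ℤ => ‖a L K‖ * schurWeight s K L) ∧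
        ∑' K : ℤ, ‖a L K‖ * schurWeight s K L ≤ Na := by
      intro L
      have h := haR L
      have he : (fun K : ℤ => ‖a L K‖ * schurWeight s K L)
          = fun K : ℤ => ‖a L K‖ * schurWeight s L K := by
        funext K; rw [schurWeight_symm]
      rw [he]; exact h
    have haRT : ∀ K : ℤ, Summable (fun L : ℤ => ‖a L K‖ * schurWeight s K L) ∧
        ∑' L : ℤ, ‖a L K‖ * schurWeight s K L ≤ Na := by
      intro K
      have h := haC K
      have he : (fun L : ℤ => ‖a L K‖ * schurWeight s K L)
          = fun L : ℤ => ‖a L K‖ * schurWeight s L K := by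
        funext L; rw [schurWeight_symm]
      rw [he]; exact h
    have h := schur_row s hs (fun x y => b y x) (fun x y => a y x) Nb Na
      hbRT haCT haRT l
    have he : (fun K : ℤ => ‖∑' m : ℤ, b m l * a K m‖ * schurWeight s l K)
        = fun K : ℤ => ‖∑' m : ℤ, a K m * b m l‖ * schurWeight s K l := by
      funext K
      rw [schurWeight_symm]
      congr 1
      rw [tsum_congr (fun m => mul_comm (b m l) (a K m))]
    rw [he] at h
    refine ⟨h.1, ?_⟩
    calc ∑' K : ℤ, ‖∑' m : ℤ, a K m * b m l‖ * schurWeight s K l ≤ Nb * Na := h.2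
      _ = 1 * Na * Nb := by ring
end

section
/- Let F = {f_n} be a frame for H with bounds A, B, and suppose the sequence E = {e_n} in H satisfies ‖Σ_{n∈F₀} c_n (e_n − f_n)‖ ≤ μ(Σ_{n∈F₀}|c_n|²)^{1/2} for all finite F₀ and scalars c_n, with 0 < μ < √A. Then E is a Bessel sequence with bound (√B + μ)², i.e., Σ_n |⟨f, e_n⟩|² ≤ (√B + μ)²‖f‖² for all f ∈ H. -/
set_option maxHeartbeats 1000000 in
/-- Upper (Bessel) bound part of the Casazza–Christensen argument. -/
theorem stmt_8 {H : Type*} [NormedAddCommGroup H] [InnerProductSpace ℂ H] [CompleteSpace H]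
    (F E : ℤ → H) (A B mu : ℝ) (hA : 0 < A) (hAB : A ≤ B)
    (hframe : ∀ f : H,
      A * ‖f‖ ^ 2 ≤ ∑' n : ℤ, ‖(inner ℂ f (F n) : ℂ)‖ ^ 2 ∧
      ∑' n : ℤ, ‖(inner ℂ f (F n) : ℂ)‖ ^ 2 ≤ B * ‖f‖ ^ 2)
    (hmu0 : 0 < mu) (hmuA : mu < Real.sqrt A)
    (hpert : ∀ (F₀ : Finset ℤ) (c : ℤ → ℂ),
      ‖∑ n ∈ F₀, c n • (E n - F n)‖ ≤ mu * Real.sqrt (∑ n ∈ F₀, ‖c n‖ ^ 2)) :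
    ∀ f : H, ∑' n : ℤ, ‖(inner ℂ f (E n) : ℂ)‖ ^ 2 ≤ (Real.sqrt B + mu) ^ 2 * ‖f‖ ^ 2 := by
  intro f
  set T : ℝ := Real.sqrt B + mu with hT
  have hT0 : 0 ≤ T := by positivity
  -- Summability of the F-coefficient series for every vector (from the lower frame bound)
  have hsumF : ∀ h : H, Summable (fun n : ℤ => ‖(inner ℂ h (F n) : ℂ)‖ ^ 2) := by
    intro h
    by_contra hns
    have h0 : ∑' n : ℤ, ‖(inner ℂ h (F n) : ℂ)‖ ^ 2 = 0 := tsum_eq_zero_of_not_summable hns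
    have h1 := (hframe h).1
    rw [h0] at h1
    have hh : h = 0 := by
      by_contra hne
      have hn : 0 < ‖h‖ := norm_pos_iff.mpr hne
      have : 0 < A * ‖h‖ ^ 2 := by positivity
      linarith
    subst hh
    exact hns (by simpa using summable_zero)
  -- The key finite-set estimate
  have key : ∀ F₀ : Finset ℤ, ∑ n ∈ F₀, ‖(inner ℂ f (E n) : ℂ)‖ ^ 2 ≤ (T * ‖f‖) ^ 2 := by
    intro F₀
    set c : ℤ → ℂ := fun n => (inner ℂ (E n) f : ℂ) with hc
    set S : ℝ := ∑ n ∈ F₀, ‖(inner ℂ f (E n) : ℂ)‖ ^ 2 with hS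
    have hS0 : 0 ≤ S := Finset.sum_nonneg fun n _ => sq_nonneg _
    have hcnorm : ∀ n, ‖c n‖ ^ 2 = ‖(inner ℂ f (E n) : ℂ)‖ ^ 2 := by
      intro n
      rw [hc, ← inner_conj_symm f (E n), RCLike.norm_conj]
    have hcS : ∑ n ∈ F₀, ‖c n‖ ^ 2 = S := Finset.sum_congr rfl fun n _ => hcnorm n
    set g : H := ∑ n ∈ F₀, c n • E n with hg
    have hinner : (inner ℂ f g : ℂ) = (S : ℂ) := by
      rw [hg, inner_sum, hS]
      push_cast
      refine Finset.sum_congr rfl fun n _ => ?_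
      rw [inner_smul_right]
      simp only [hc]
      rw [show (inner ℂ (E n) f : ℂ) = (starRingEnd ℂ) (inner ℂ f (E n)) from
        (inner_conj_symm (E n) f).symm]
      rw [RCLike.conj_mul]
      norm_cast
    -- bound on ‖∑ c n • F n‖
    set h₁ : H := ∑ n ∈ F₀, c n • F n with hh1
    have hFb : ‖h₁‖ ≤ Real.sqrt B * Real.sqrt S := by
      have hsq : ‖h₁‖ ^ 2 ≤ Real.sqrt S * (Real.sqrt B * ‖h₁‖) := by
        have e1 : (inner ℂ h₁ h₁ : ℂ) =
            ∑ n ∈ F₀, (starRingEnd ℂ) (c n) * (inner ℂ (F n) h₁ : ℂ) := by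
          rw [hh1, sum_inner]
          exact Finset.sum_congr rfl fun n _ => by rw [inner_smul_left]
        have e2 : ‖h₁‖ ^ 2 = ‖(inner ℂ h₁ h₁ : ℂ)‖ := by
          rw [inner_self_eq_norm_sq_to_K]
          simp [sq_abs, abs_of_nonneg (norm_nonneg h₁)]
        have e3 : ‖(inner ℂ h₁ h₁ : ℂ)‖ ≤
            ∑ n ∈ F₀, ‖c n‖ * ‖(inner ℂ (F n) h₁ : ℂ)‖ := by
          rw [e1]
          refine (norm_sum_le _ _).trans (le_of_eq ?_)
          refine Finset.sum_congr rfl fun n _ => ?_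
          rw [norm_mul, RCLike.norm_conj]
        have e4 : (∑ n ∈ F₀, ‖c n‖ * ‖(inner ℂ (F n) h₁ : ℂ)‖) ^ 2 ≤
            (∑ n ∈ F₀, ‖c n‖ ^ 2) * ∑ n ∈ F₀, ‖(inner ℂ (F n) h₁ : ℂ)‖ ^ 2 :=
          Finset.sum_mul_sq_le_sq_mul_sq F₀ _ _
        have e5 : ∑ n ∈ F₀, ‖(inner ℂ (F n) h₁ : ℂ)‖ ^ 2 ≤ B * ‖h₁‖ ^ 2 := by
          have : ∑ n ∈ F₀, ‖(inner ℂ (F n) h₁ : ℂ)‖ ^ 2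
              = ∑ n ∈ F₀, ‖(inner ℂ h₁ (F n) : ℂ)‖ ^ 2 := by
            refine Finset.sum_congr rfl fun n _ => ?_
            rw [← inner_conj_symm h₁ (F n), RCLike.norm_conj]
          rw [this]
          exact le_trans (Summable.sum_le_tsum F₀ (fun n _ => sq_nonneg _) (hsumF h₁)) (hframe h₁).2
        have e6 : ∑ n ∈ F₀, ‖c n‖ * ‖(inner ℂ (F n) h₁ : ℂ)‖ ≤
            Real.sqrt S * (Real.sqrt B * ‖h₁‖) := by
          have hnn : 0 ≤ ∑ n ∈ F₀, ‖c n‖ * ‖(inner ℂ (F n) h₁ : ℂ)‖ :=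
            Finset.sum_nonneg fun n _ => mul_nonneg (norm_nonneg _) (norm_nonneg _)
          have hB0 : (0:ℝ) ≤ B := le_trans hA.le hAB
          have hrhs : (Real.sqrt S * (Real.sqrt B * ‖h₁‖)) ^ 2 =
              S * (B * ‖h₁‖ ^ 2) := by
            rw [mul_pow, mul_pow, Real.sq_sqrt hS0, Real.sq_sqrt hB0]
          have h2 : (∑ n ∈ F₀, ‖c n‖ * ‖(inner ℂ (F n) h₁ : ℂ)‖) ^ 2 ≤
              S * (B * ‖h₁‖ ^ 2) := by
            calc (∑ n ∈ F₀, ‖c n‖ * ‖(inner ℂ (F n) h₁ : ℂ)‖) ^ 2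
                ≤ (∑ n ∈ F₀, ‖c n‖ ^ 2) * ∑ n ∈ F₀, ‖(inner ℂ (F n) h₁ : ℂ)‖ ^ 2 := e4
              _ ≤ S * (B * ‖h₁‖ ^ 2) := by
                  rw [hcS]
                  exact mul_le_mul_of_nonneg_left e5 hS0
          have hy : 0 ≤ Real.sqrt S * (Real.sqrt B * ‖h₁‖) := by positivity
          have h3 : (∑ n ∈ F₀, ‖c n‖ * ‖(inner ℂ (F n) h₁ : ℂ)‖) ^ 2 ≤
              (Real.sqrt S * (Real.sqrt B * ‖h₁‖)) ^ 2 := by rw [hrhs]; exact h2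
          calc ∑ n ∈ F₀, ‖c n‖ * ‖(inner ℂ (F n) h₁ : ℂ)‖
              = Real.sqrt ((∑ n ∈ F₀, ‖c n‖ * ‖(inner ℂ (F n) h₁ : ℂ)‖) ^ 2) :=
                (Real.sqrt_sq hnn).symm
            _ ≤ Real.sqrt ((Real.sqrt S * (Real.sqrt B * ‖h₁‖)) ^ 2) := Real.sqrt_le_sqrt h3
            _ = Real.sqrt S * (Real.sqrt B * ‖h₁‖) := Real.sqrt_sq hy
        exact e2 ▸ le_trans e3 e6
      rcases eq_or_lt_of_le (norm_nonneg h₁) with h0 | h0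
      · rw [← h0]
        positivity
      · have : ‖h₁‖ * ‖h₁‖ ≤ (Real.sqrt B * Real.sqrt S) * ‖h₁‖ := by
          nlinarith
        exact le_of_mul_le_mul_right this h0
    have hEF : ‖∑ n ∈ F₀, c n • (E n - F n)‖ ≤ mu * Real.sqrt S := by
      have := hpert F₀ c
      rwa [hcS] at this
    have hgnorm : ‖g‖ ≤ T * Real.sqrt S := by
      have hdecomp : g = h₁ + ∑ n ∈ F₀, c n • (E n - F n) := by
        rw [hg, hh1, ← Finset.sum_add_distrib]
        refine Finset.sum_congr rfl fun n _ => ?_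
        rw [smul_sub]
        abel
      calc ‖g‖ ≤ ‖h₁‖ + ‖∑ n ∈ F₀, c n • (E n - F n)‖ := by
            rw [hdecomp]; exact norm_add_le _ _
        _ ≤ Real.sqrt B * Real.sqrt S + mu * Real.sqrt S := add_le_add hFb hEF
        _ = T * Real.sqrt S := by rw [hT]; ring
    have hSle : S ≤ ‖f‖ * (T * Real.sqrt S) := by
      have hSn : S = ‖(inner ℂ f g : ℂ)‖ := by
        rw [hinner]
        simp [abs_of_nonneg hS0]
      calc S = ‖(inner ℂ f g : ℂ)‖ := hSn
        _ ≤ ‖f‖ * ‖g‖ := norm_inner_le_norm _ _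
        _ ≤ ‖f‖ * (T * Real.sqrt S) := mul_le_mul_of_nonneg_left hgnorm (norm_nonneg f)
    have hsS : Real.sqrt S * Real.sqrt S = S := Real.mul_self_sqrt hS0
    nlinarith [Real.sqrt_nonneg S, sq_nonneg (Real.sqrt S - T * ‖f‖), norm_nonneg f]
  have hsum : Summable (fun n : ℤ => ‖(inner ℂ f (E n) : ℂ)‖ ^ 2) :=
    summable_of_sum_le (fun n => sq_nonneg _) key
  have := Summable.tsum_le_of_sum_le hsum key
  calc ∑' n : ℤ, ‖(inner ℂ f (E n) : ℂ)‖ ^ 2 ≤ (T * ‖f‖) ^ 2 := this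
    _ = T ^ 2 * ‖f‖ ^ 2 := by ring
end

section
/- Let G = {g_x} be a frame for H whose Gramian A(G,G) = (⟨g_x, g_y⟩) satisfies the Schur condition with constant M = ‖A(G,G)‖_{A¹}, and let G̃ = {g̃_x} be a dual frame (every h ∈ H satisfies h = Σ_x ⟨h, g̃_x⟩ g_x). Suppose the sequences E = {e_n}, F = {f_n} satisfy max{sup_n Σ_x |⟨e_n − f_n, g̃_x⟩|, sup_x Σ_n |⟨e_n − f_n, g̃_x⟩|} ≤ ε. Then for every finitely supported scalar sequence c, ‖Σ_n c_n (e_n − f_n)‖ ≤ √M · ε · (Σ_n |c_n|²)^{1/2}. -/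
/-- Core estimate of Proposition 3.5: cross-Gramian localization of the perturbation
gives an ℓ²-synthesis bound. -/
theorem stmt_9 {H : Type*} [NormedAddCommGroup H] [InnerProductSpace ℂ H] [CompleteSpace H]
    (g gt F E : ℤ → H) (M ε : ℝ)
    (hGram_row : ∀ x : ℤ, Summable (fun y : ℤ => ‖(inner ℂ (g x) (g y) : ℂ)‖) ∧
      ∑' y : ℤ, ‖(inner ℂ (g x) (g y) : ℂ)‖ ≤ M)
    (hGram_col : ∀ y : ℤ, Summable (fun x : ℤ => ‖(inner ℂ (g x) (g y) : ℂ)‖) ∧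
      ∑' x : ℤ, ‖(inner ℂ (g x) (g y) : ℂ)‖ ≤ M)
    (hdual : ∀ h : H, HasSum (fun x : ℤ => (inner ℂ h (gt x) : ℂ) • g x) h)
    (hpert_row : ∀ n : ℤ, Summable (fun x : ℤ => ‖(inner ℂ (E n - F n) (gt x) : ℂ)‖) ∧
      ∑' x : ℤ, ‖(inner ℂ (E n - F n) (gt x) : ℂ)‖ ≤ ε)
    (hpert_col : ∀ x : ℤ, Summable (fun n : ℤ => ‖(inner ℂ (E n - F n) (gt x) : ℂ)‖) ∧
      ∑' n : ℤ, ‖(inner ℂ (E n - F n) (gt x) : ℂ)‖ ≤ ε) :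
    ∀ (F₀ : Finset ℤ) (c : ℤ → ℂ),
      ‖∑ n ∈ F₀, c n • (E n - F n)‖ ≤
        Real.sqrt M * ε * Real.sqrt (∑ n ∈ F₀, ‖c n‖ ^ 2) := by
  intro F₀ c
  classical
  have hε0 : 0 ≤ ε := le_trans (tsum_nonneg fun _ => norm_nonneg _) (hpert_row 0).2
  have hM0 : 0 ≤ M := le_trans (tsum_nonneg fun _ => norm_nonneg _) (hGram_row 0).2
  set S : H := ∑ n ∈ F₀, c n • (E n - F n) with hSdef
  set d : ℤ → ℂ := fun x => (inner ℂ S (gt x) : ℂ) with hd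
  -- pointwise bound on coefficients
  have hdle : ∀ x, ‖d x‖ ≤ ∑ n ∈ F₀, ‖c n‖ * ‖(inner ℂ (E n - F n) (gt x) : ℂ)‖ := by
    intro x
    have h1 : d x = ∑ n ∈ F₀, (starRingEnd ℂ) (c n) * (inner ℂ (E n - F n) (gt x) : ℂ) := by
      simp only [hd, hSdef, sum_inner, inner_smul_left]
    rw [h1]
    refine (norm_sum_le _ _).trans (le_of_eq (Finset.sum_congr rfl fun n _ => ?_))
    simp [norm_mul]
  -- summability of |d|
  have hbound_summ : Summable
      (fun x => ∑ n ∈ F₀, ‖c n‖ * ‖(inner ℂ (E n - F n) (gt x) : ℂ)‖) :=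
    summable_sum fun n _ => ((hpert_row n).1.mul_left ‖c n‖)
  have hd_abs : Summable fun x => ‖d x‖ :=
    Summable.of_nonneg_of_le (fun _ => norm_nonneg _) hdle hbound_summ
  set D : ℝ := ∑' x, ‖d x‖ with hD
  have hdD : ∀ x, ‖d x‖ ≤ D := fun x => Summable.le_tsum hd_abs x fun _ _ => norm_nonneg _
  have hD0 : 0 ≤ D := tsum_nonneg fun _ => norm_nonneg _
  have hdsq : Summable fun x => ‖d x‖ ^ 2 := by
    refine Summable.of_nonneg_of_le (fun _ => sq_nonneg _) (fun x => ?_) (hd_abs.mul_left D)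
    calc ‖d x‖ ^ 2 = ‖d x‖ * ‖d x‖ := sq ‖d x‖
    _ ≤ D * ‖d x‖ := mul_le_mul_of_nonneg_right (hdD x) (norm_nonneg _)
  -- ℓ² bound on the coefficients d
  have key_d : ∑' x, ‖d x‖ ^ 2 ≤ ε ^ 2 * ∑ n ∈ F₀, ‖c n‖ ^ 2 := by
    have hpt : ∀ x, ‖d x‖ ^ 2 ≤
        ε * ∑ n ∈ F₀, ‖c n‖ ^ 2 * ‖(inner ℂ (E n - F n) (gt x) : ℂ)‖ := by
      intro x
      have hCS : (∑ n ∈ F₀, ‖c n‖ * ‖(inner ℂ (E n - F n) (gt x) : ℂ)‖) ^ 2 ≤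
          (∑ n ∈ F₀, ‖(inner ℂ (E n - F n) (gt x) : ℂ)‖) *
            ∑ n ∈ F₀, ‖c n‖ ^ 2 * ‖(inner ℂ (E n - F n) (gt x) : ℂ)‖ := by
        refine Finset.sum_sq_le_sum_mul_sum_of_sq_eq_mul F₀
          (fun n _ => norm_nonneg _)
          (fun n _ => mul_nonneg (sq_nonneg _) (norm_nonneg _)) (fun n _ => by ring)
      have hcol : (∑ n ∈ F₀, ‖(inner ℂ (E n - F n) (gt x) : ℂ)‖) ≤ ε :=
        le_trans (Summable.sum_le_tsum F₀ (fun n _ => norm_nonneg _) (hpert_col x).1) (hpert_col x).2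
      calc ‖d x‖ ^ 2 ≤ (∑ n ∈ F₀, ‖c n‖ * ‖(inner ℂ (E n - F n) (gt x) : ℂ)‖) ^ 2 := by
            exact pow_le_pow_left₀ (norm_nonneg _) (hdle x) 2
      _ ≤ (∑ n ∈ F₀, ‖(inner ℂ (E n - F n) (gt x) : ℂ)‖) *
            ∑ n ∈ F₀, ‖c n‖ ^ 2 * ‖(inner ℂ (E n - F n) (gt x) : ℂ)‖ := hCS
      _ ≤ ε * ∑ n ∈ F₀, ‖c n‖ ^ 2 * ‖(inner ℂ (E n - F n) (gt x) : ℂ)‖ := by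
            refine mul_le_mul_of_nonneg_right hcol ?_
            exact Finset.sum_nonneg fun n _ => mul_nonneg (sq_nonneg _) (norm_nonneg _)
    have hrhs_summ : Summable
        (fun x => ∑ n ∈ F₀, ‖c n‖ ^ 2 * ‖(inner ℂ (E n - F n) (gt x) : ℂ)‖) :=
      summable_sum fun n _ => ((hpert_row n).1.mul_left (‖c n‖ ^ 2))
    calc ∑' x, ‖d x‖ ^ 2
        ≤ ∑' x, ε * ∑ n ∈ F₀, ‖c n‖ ^ 2 * ‖(inner ℂ (E n - F n) (gt x) : ℂ)‖ :=
          Summable.tsum_le_tsum hpt hdsq (hrhs_summ.mul_left ε)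
    _ = ε * ∑ n ∈ F₀, ∑' x, ‖c n‖ ^ 2 * ‖(inner ℂ (E n - F n) (gt x) : ℂ)‖ := by
          rw [tsum_mul_left, Summable.tsum_finsetSum fun n _ => ((hpert_row n).1.mul_left (‖c n‖ ^ 2))]
    _ ≤ ε * ∑ n ∈ F₀, ‖c n‖ ^ 2 * ε := by
          refine mul_le_mul_of_nonneg_left (Finset.sum_le_sum fun n _ => ?_) hε0
          rw [tsum_mul_left]
          exact mul_le_mul_of_nonneg_left (hpert_row n).2 (sq_nonneg _)
    _ = ε ^ 2 * ∑ n ∈ F₀, ‖c n‖ ^ 2 := by rw [← Finset.sum_mul]; ring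
  -- frame expansion of S
  have hSsum : HasSum (fun x => d x • g x) S := hdual S
  have hinner : ∀ v : H, HasSum (fun x => d x * (inner ℂ v (g x) : ℂ)) (inner ℂ v S : ℂ) := by
    intro v
    have h2 := (innerSL ℂ v).hasSum hSsum
    simpa [inner_smul_right] using h2
  -- row sums against the Gramian
  have hsumrow : ∀ x, Summable (fun y => ‖d y‖ * ‖(inner ℂ (g x) (g y) : ℂ)‖) := fun x =>
    Summable.of_nonneg_of_le (fun y => mul_nonneg (norm_nonneg _) (norm_nonneg _))
      (fun y => mul_le_mul_of_nonneg_right (hdD y) (norm_nonneg _))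
      ((hGram_row x).1.mul_left D)
  have hrowDM : ∀ x, ∑' y, ‖d y‖ * ‖(inner ℂ (g x) (g y) : ℂ)‖ ≤ D * M := by
    intro x
    calc ∑' y, ‖d y‖ * ‖(inner ℂ (g x) (g y) : ℂ)‖
        ≤ ∑' y, D * ‖(inner ℂ (g x) (g y) : ℂ)‖ :=
          Summable.tsum_le_tsum (fun y => mul_le_mul_of_nonneg_right (hdD y) (norm_nonneg _))
            (hsumrow x) ((hGram_row x).1.mul_left D)
    _ = D * ∑' y, ‖(inner ℂ (g x) (g y) : ℂ)‖ := tsum_mul_left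
    _ ≤ D * M := mul_le_mul_of_nonneg_left (hGram_row x).2 hD0
  have hGrow : ∀ x, ‖(inner ℂ S (g x) : ℂ)‖ ≤ ∑' y, ‖d y‖ * ‖(inner ℂ (g x) (g y) : ℂ)‖ := by
    intro x
    rw [norm_inner_symm, ← (hinner (g x)).tsum_eq]
    have hs : Summable fun y => ‖d y * (inner ℂ (g x) (g y) : ℂ)‖ := by
      simpa [norm_mul] using hsumrow x
    refine (norm_tsum_le_tsum_norm hs).trans (le_of_eq (tsum_congr fun y => ?_))
    simp [norm_mul]
  -- ‖S‖² ≤ ∑' x, ‖d x‖ * (row sum)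
  have hstep1 : ‖S‖ ^ 2 ≤ ∑' x, ‖d x‖ * ∑' y, ‖d y‖ * ‖(inner ℂ (g x) (g y) : ℂ)‖ := by
    have h0 : ‖S‖ ^ 2 ≤ ‖(inner ℂ S S : ℂ)‖ := by
      rw [← @inner_self_eq_norm_sq ℂ]
      exact RCLike.re_le_norm _
    have hsum1 : Summable fun x => ‖d x * (inner ℂ S (g x) : ℂ)‖ := by
      refine Summable.of_nonneg_of_le (fun _ => norm_nonneg _) (fun x => ?_)
        (hd_abs.mul_right (D * M))
      rw [norm_mul]
      exact mul_le_mul_of_nonneg_left ((hGrow x).trans (hrowDM x)) (norm_nonneg _)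
    calc ‖S‖ ^ 2 ≤ ‖(inner ℂ S S : ℂ)‖ := h0
    _ = ‖∑' x, d x * (inner ℂ S (g x) : ℂ)‖ := by rw [(hinner S).tsum_eq]
    _ ≤ ∑' x, ‖d x * (inner ℂ S (g x) : ℂ)‖ := norm_tsum_le_tsum_norm hsum1
    _ ≤ ∑' x, ‖d x‖ * ∑' y, ‖d y‖ * ‖(inner ℂ (g x) (g y) : ℂ)‖ := by
        refine Summable.tsum_le_tsum (fun x => ?_) hsum1 ?_
        · rw [norm_mul]
          exact mul_le_mul_of_nonneg_left (hGrow x) (norm_nonneg _)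
        · refine Summable.of_nonneg_of_le
            (fun x => mul_nonneg (norm_nonneg _) (tsum_nonneg fun y =>
              mul_nonneg (norm_nonneg _) (norm_nonneg _)))
            (fun x => mul_le_mul_of_nonneg_left (hrowDM x) (norm_nonneg _))
            (hd_abs.mul_right (D * M))
  -- Schur symmetrization
  have hsum_sqrow : ∀ x, Summable (fun y => ‖d y‖ ^ 2 * ‖(inner ℂ (g x) (g y) : ℂ)‖) := by
    intro x
    refine Summable.of_nonneg_of_le (fun y => mul_nonneg (sq_nonneg _) (norm_nonneg _))
      (fun y => ?_) ((hGram_row x).1.mul_left (D ^ 2))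
    refine mul_le_mul_of_nonneg_right ?_ (norm_nonneg _)
    exact pow_le_pow_left₀ (norm_nonneg _) (hdD y) 2
  -- Fubini data for the function (y, x) ↦ ‖d y‖² * ‖⟪g x, g y⟫‖
  have hprod : Summable (Function.uncurry fun y x => ‖d y‖ ^ 2 * ‖(inner ℂ (g x) (g y) : ℂ)‖) := by
    refine (summable_prod_of_nonneg fun p => mul_nonneg (sq_nonneg _) (norm_nonneg _)).2 ⟨?_, ?_⟩
    · exact fun y => ((hGram_col y).1.mul_left (‖d y‖ ^ 2))
    · refine Summable.of_nonneg_of_le (fun y => tsum_nonneg fun x =>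
        mul_nonneg (sq_nonneg _) (norm_nonneg _)) (fun y => ?_) (hdsq.mul_right M)
      calc ∑' x, ‖d y‖ ^ 2 * ‖(inner ℂ (g x) (g y) : ℂ)‖
          = ‖d y‖ ^ 2 * ∑' x, ‖(inner ℂ (g x) (g y) : ℂ)‖ := tsum_mul_left
      _ ≤ ‖d y‖ ^ 2 * M := mul_le_mul_of_nonneg_left (hGram_col y).2 (sq_nonneg _)
  have hPsummable : Summable (fun x => ∑' y, ‖d y‖ ^ 2 * ‖(inner ℂ (g x) (g y) : ℂ)‖) := by
    have := hprod.prod_symm.prod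
    simpa [Function.uncurry] using this
  have hfubini : ∑' x, ∑' y, ‖d y‖ ^ 2 * ‖(inner ℂ (g x) (g y) : ℂ)‖ ≤ M * ∑' y, ‖d y‖ ^ 2 := by
    have hc := Summable.tsum_comm (f := fun y x => ‖d y‖ ^ 2 * ‖(inner ℂ (g x) (g y) : ℂ)‖) hprod
    rw [hc]
    calc ∑' y, ∑' x, ‖d y‖ ^ 2 * ‖(inner ℂ (g x) (g y) : ℂ)‖
        ≤ ∑' y, M * ‖d y‖ ^ 2 := by
          refine Summable.tsum_le_tsum (fun y => ?_) (hprod.prod) (hdsq.mul_left M)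
          rw [tsum_mul_left, mul_comm M]
          exact mul_le_mul_of_nonneg_left (hGram_col y).2 (sq_nonneg _)
    _ = M * ∑' y, ‖d y‖ ^ 2 := tsum_mul_left
  have hschur : (∑' x, ‖d x‖ * ∑' y, ‖d y‖ * ‖(inner ℂ (g x) (g y) : ℂ)‖)
      ≤ M * ∑' x, ‖d x‖ ^ 2 := by
    have hpt : ∀ x, ‖d x‖ * ∑' y, ‖d y‖ * ‖(inner ℂ (g x) (g y) : ℂ)‖ ≤
        M / 2 * ‖d x‖ ^ 2 + (1 / 2) * ∑' y, ‖d y‖ ^ 2 * ‖(inner ℂ (g x) (g y) : ℂ)‖ := by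
      intro x
      have e1 : ‖d x‖ * ∑' y, ‖d y‖ * ‖(inner ℂ (g x) (g y) : ℂ)‖
          = ∑' y, ‖d x‖ * (‖d y‖ * ‖(inner ℂ (g x) (g y) : ℂ)‖) := tsum_mul_left.symm
      rw [e1]
      have e2 : ∀ y, ‖d x‖ * (‖d y‖ * ‖(inner ℂ (g x) (g y) : ℂ)‖) ≤
          ‖d x‖ ^ 2 / 2 * ‖(inner ℂ (g x) (g y) : ℂ)‖
            + (1 / 2) * (‖d y‖ ^ 2 * ‖(inner ℂ (g x) (g y) : ℂ)‖) := by
        intro y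
        have h2 : ‖d x‖ * ‖d y‖ ≤ (‖d x‖ ^ 2 + ‖d y‖ ^ 2) / 2 := by
          nlinarith [sq_nonneg (‖d x‖ - ‖d y‖)]
        calc ‖d x‖ * (‖d y‖ * ‖(inner ℂ (g x) (g y) : ℂ)‖)
            = (‖d x‖ * ‖d y‖) * ‖(inner ℂ (g x) (g y) : ℂ)‖ := by ring
        _ ≤ (‖d x‖ ^ 2 + ‖d y‖ ^ 2) / 2 * ‖(inner ℂ (g x) (g y) : ℂ)‖ :=
            mul_le_mul_of_nonneg_right h2 (norm_nonneg _)
        _ = ‖d x‖ ^ 2 / 2 * ‖(inner ℂ (g x) (g y) : ℂ)‖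
              + (1 / 2) * (‖d y‖ ^ 2 * ‖(inner ℂ (g x) (g y) : ℂ)‖) := by ring
      have hs1 : Summable fun y => ‖d x‖ ^ 2 / 2 * ‖(inner ℂ (g x) (g y) : ℂ)‖ :=
        (hGram_row x).1.mul_left _
      have hs2 : Summable fun y => (1 / 2 : ℝ) * (‖d y‖ ^ 2 * ‖(inner ℂ (g x) (g y) : ℂ)‖) :=
        (hsum_sqrow x).mul_left _
      calc ∑' y, ‖d x‖ * (‖d y‖ * ‖(inner ℂ (g x) (g y) : ℂ)‖)
          ≤ ∑' y, (‖d x‖ ^ 2 / 2 * ‖(inner ℂ (g x) (g y) : ℂ)‖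
              + (1 / 2) * (‖d y‖ ^ 2 * ‖(inner ℂ (g x) (g y) : ℂ)‖)) := by
            refine Summable.tsum_le_tsum e2 ?_ (hs1.add hs2)
            simpa [mul_assoc] using (hsumrow x).mul_left ‖d x‖
      _ = (∑' y, ‖d x‖ ^ 2 / 2 * ‖(inner ℂ (g x) (g y) : ℂ)‖)
            + ∑' y, (1 / 2 : ℝ) * (‖d y‖ ^ 2 * ‖(inner ℂ (g x) (g y) : ℂ)‖) := Summable.tsum_add hs1 hs2
      _ = ‖d x‖ ^ 2 / 2 * (∑' y, ‖(inner ℂ (g x) (g y) : ℂ)‖)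
            + (1 / 2) * ∑' y, ‖d y‖ ^ 2 * ‖(inner ℂ (g x) (g y) : ℂ)‖ := by
            rw [tsum_mul_left, tsum_mul_left]
      _ ≤ ‖d x‖ ^ 2 / 2 * M
            + (1 / 2) * ∑' y, ‖d y‖ ^ 2 * ‖(inner ℂ (g x) (g y) : ℂ)‖ := by
            have := mul_le_mul_of_nonneg_left (hGram_row x).2 (by positivity : (0:ℝ) ≤ ‖d x‖ ^ 2 / 2)
            linarith
      _ = M / 2 * ‖d x‖ ^ 2 + (1 / 2) * ∑' y, ‖d y‖ ^ 2 * ‖(inner ℂ (g x) (g y) : ℂ)‖ := by ring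
    have hlhs_summ : Summable fun x => ‖d x‖ * ∑' y, ‖d y‖ * ‖(inner ℂ (g x) (g y) : ℂ)‖ := by
      refine Summable.of_nonneg_of_le (fun x => mul_nonneg (norm_nonneg _)
        (tsum_nonneg fun y => mul_nonneg (norm_nonneg _) (norm_nonneg _))) (fun x => ?_)
        (hd_abs.mul_right (D * M))
      exact mul_le_mul_of_nonneg_left (hrowDM x) (norm_nonneg _)
    calc ∑' x, ‖d x‖ * ∑' y, ‖d y‖ * ‖(inner ℂ (g x) (g y) : ℂ)‖
        ≤ ∑' x, (M / 2 * ‖d x‖ ^ 2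
            + (1 / 2) * ∑' y, ‖d y‖ ^ 2 * ‖(inner ℂ (g x) (g y) : ℂ)‖) :=
          Summable.tsum_le_tsum hpt hlhs_summ ((hdsq.mul_left _).add (hPsummable.mul_left _))
    _ = M / 2 * (∑' x, ‖d x‖ ^ 2)
          + (1 / 2) * ∑' x, ∑' y, ‖d y‖ ^ 2 * ‖(inner ℂ (g x) (g y) : ℂ)‖ := by
          rw [Summable.tsum_add (hdsq.mul_left _) (hPsummable.mul_left _), tsum_mul_left, tsum_mul_left]
    _ ≤ M / 2 * (∑' x, ‖d x‖ ^ 2) + (1 / 2) * (M * ∑' x, ‖d x‖ ^ 2) := by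
          have := hfubini; linarith
    _ = M * ∑' x, ‖d x‖ ^ 2 := by ring
  -- combine
  have hfinal : ‖S‖ ^ 2 ≤ M * (ε ^ 2 * ∑ n ∈ F₀, ‖c n‖ ^ 2) :=
    hstep1.trans (hschur.trans (mul_le_mul_of_nonneg_left key_d hM0))
  have := Real.sqrt_le_sqrt hfinal
  rw [Real.sqrt_sq (norm_nonneg S)] at this
  refine this.trans (le_of_eq ?_)
  rw [Real.sqrt_mul hM0, Real.sqrt_mul (sq_nonneg ε), Real.sqrt_sq hε0, mul_assoc]
end

section
/- Let F be a frame for H with bounds A, B, let G, G̃ be as above with M = ‖A(G,G)‖_{A¹}, and let E satisfy max{sup_n Σ_x |⟨e_n − f_n, g̃_x⟩|, sup_x Σ_n |⟨e_n − f_n, g̃_x⟩|} ≤ ε with 0 < ε < (√(A⁻¹ M))⁻¹. Then E is a frame for H with bounds A(1 − √(A⁻¹M) ε)² and B(1 + √(B⁻¹M) ε)². -/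
open scoped ComplexConjugate

private lemma cs_tsum {u v : ℤ → ℝ} (hu : ∀ n, 0 ≤ u n) (hv : ∀ n, 0 ≤ v n)
    (hu2 : Summable fun n => u n ^ 2) (hv2 : Summable fun n => v n ^ 2) :
    Summable (fun n => u n * v n) ∧
      ∑' n, u n * v n ≤ Real.sqrt (∑' n, u n ^ 2) * Real.sqrt (∑' n, v n ^ 2) := by
  have key : ∀ s : Finset ℤ,
      ∑ n ∈ s, u n * v n ≤ Real.sqrt (∑' n, u n ^ 2) * Real.sqrt (∑' n, v n ^ 2) := by
    intro s
    have h1 : (∑ n ∈ s, u n * v n) ^ 2 ≤ (∑' n, u n ^ 2) * ∑' n, v n ^ 2 :=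
      (Finset.sum_mul_sq_le_sq_mul_sq s u v).trans
        (mul_le_mul (Summable.sum_le_tsum s (fun i _ => sq_nonneg _) hu2)
          (Summable.sum_le_tsum s (fun i _ => sq_nonneg _) hv2)
          (Finset.sum_nonneg fun i _ => sq_nonneg _) (tsum_nonneg fun i => sq_nonneg _))
    have h2 : 0 ≤ ∑ n ∈ s, u n * v n :=
      Finset.sum_nonneg fun i _ => mul_nonneg (hu i) (hv i)
    calc ∑ n ∈ s, u n * v n = Real.sqrt ((∑ n ∈ s, u n * v n) ^ 2) := (Real.sqrt_sq h2).symm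
      _ ≤ Real.sqrt ((∑' n, u n ^ 2) * ∑' n, v n ^ 2) := Real.sqrt_le_sqrt h1
      _ = _ := Real.sqrt_mul (tsum_nonneg fun i => sq_nonneg _) _
  have hsum : Summable (fun n => u n * v n) :=
    summable_of_sum_le (fun n => mul_nonneg (hu n) (hv n)) key
  exact ⟨hsum, Summable.tsum_le_of_sum_le hsum key⟩

private lemma mink_tsum {u v : ℤ → ℝ} (hu : ∀ n, 0 ≤ u n) (hv : ∀ n, 0 ≤ v n)
    (hu2 : Summable fun n => u n ^ 2) (hv2 : Summable fun n => v n ^ 2) :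
    Summable (fun n => (u n + v n) ^ 2) ∧
      Real.sqrt (∑' n, (u n + v n) ^ 2) ≤
        Real.sqrt (∑' n, u n ^ 2) + Real.sqrt (∑' n, v n ^ 2) := by
  obtain ⟨hscs, hcs⟩ := cs_tsum hu hv hu2 hv2
  have h3 : Summable fun n => 2 * (u n * v n) + v n ^ 2 := (hscs.mul_left 2).add hv2
  have hsum : Summable (fun n => (u n + v n) ^ 2) := by
    have he : (fun n => (u n + v n) ^ 2)
        = fun n => u n ^ 2 + (2 * (u n * v n) + v n ^ 2) := by
      funext n; ring
    rw [he]; exact hu2.add h3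
  refine ⟨hsum, ?_⟩
  have ht : ∑' n, (u n + v n) ^ 2
      = (∑' n, u n ^ 2) + (2 * (∑' n, u n * v n) + ∑' n, v n ^ 2) := by
    rw [← tsum_mul_left, ← Summable.tsum_add (hscs.mul_left 2) hv2, ← Summable.tsum_add hu2 h3]
    exact tsum_congr fun n => by ring
  have hb : ∑' n, (u n + v n) ^ 2
      ≤ (Real.sqrt (∑' n, u n ^ 2) + Real.sqrt (∑' n, v n ^ 2)) ^ 2 := by
    rw [ht]
    have e1 : Real.sqrt (∑' n, u n ^ 2) ^ 2 = ∑' n, u n ^ 2 :=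
      Real.sq_sqrt (tsum_nonneg fun i => sq_nonneg _)
    have e2 : Real.sqrt (∑' n, v n ^ 2) ^ 2 = ∑' n, v n ^ 2 :=
      Real.sq_sqrt (tsum_nonneg fun i => sq_nonneg _)
    nlinarith [hcs]
  calc Real.sqrt (∑' n, (u n + v n) ^ 2)
      ≤ Real.sqrt ((Real.sqrt (∑' n, u n ^ 2) + Real.sqrt (∑' n, v n ^ 2)) ^ 2) :=
        Real.sqrt_le_sqrt hb
    _ = _ := Real.sqrt_sq (by positivity)





private lemma bessel_schur {H : Type*} [NormedAddCommGroup H] [InnerProductSpace ℂ H]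
    (g : ℤ → H) (M : ℝ)
    (hrow : ∀ x : ℤ, Summable (fun y : ℤ => ‖(inner ℂ (g x) (g y) : ℂ)‖) ∧
      ∑' y : ℤ, ‖(inner ℂ (g x) (g y) : ℂ)‖ ≤ M)
    (hcol : ∀ y : ℤ, Summable (fun x : ℤ => ‖(inner ℂ (g x) (g y) : ℂ)‖) ∧
      ∑' x : ℤ, ‖(inner ℂ (g x) (g y) : ℂ)‖ ≤ M)
    (f : H) :
    Summable (fun x : ℤ => ‖(inner ℂ f (g x) : ℂ)‖ ^ 2) ∧
      ∑' x : ℤ, ‖(inner ℂ f (g x) : ℂ)‖ ^ 2 ≤ M * ‖f‖ ^ 2 := by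
  have hM0 : 0 ≤ M :=
    le_trans (tsum_nonneg fun y => norm_nonneg _) (hrow 0).2
  set c : ℤ → ℂ := fun x => inner ℂ f (g x) with hc
  have key : ∀ s : Finset ℤ, ∑ x ∈ s, ‖c x‖ ^ 2 ≤ M * ‖f‖ ^ 2 := by
    intro s
    set h : H := ∑ x ∈ s, (starRingEnd ℂ) (c x) • g x with hh
    set S : ℝ := ∑ x ∈ s, ‖c x‖ ^ 2 with hS
    have hS0 : 0 ≤ S := Finset.sum_nonneg fun i _ => sq_nonneg _
    -- inner ℂ f h = S
    have hfh : (inner ℂ f h : ℂ) = (S : ℂ) := by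
      rw [hh, inner_sum, hS]
      push_cast
      refine Finset.sum_congr rfl fun x _ => ?_
      rw [inner_smul_right, RCLike.conj_mul]
      norm_num
    have hSle : S ≤ ‖f‖ * ‖h‖ := by
      have := norm_inner_le_norm (𝕜 := ℂ) f h
      rw [hfh] at this
      simpa [abs_of_nonneg hS0] using this
    -- ‖h‖ ^ 2 ≤ M * S
    have hhh : (inner ℂ h h : ℂ)
        = ∑ x ∈ s, ∑ y ∈ s, c x * ((starRingEnd ℂ) (c y) * (inner ℂ (g x) (g y) : ℂ)) := by
      conv_lhs => rw [hh]
      rw [sum_inner]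
      refine Finset.sum_congr rfl fun x _ => ?_
      simp only [inner_smul_left, inner_sum, inner_smul_right, Finset.mul_sum,
        RingHom.id_apply, starRingEnd_self_apply]
      exact Finset.sum_congr rfl fun y _ => by ring
    have hnorm2 : ‖h‖ ^ 2 ≤ M * S := by
      have hre : ‖h‖ ^ 2 = RCLike.re (inner ℂ h h : ℂ) := norm_sq_eq_re_inner (𝕜 := ℂ) h
      have h1 : ‖h‖ ^ 2 ≤ ‖(inner ℂ h h : ℂ)‖ := by
        rw [hre]; exact RCLike.re_le_norm _
      have h2 : ‖(inner ℂ h h : ℂ)‖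
          ≤ ∑ x ∈ s, ∑ y ∈ s, ‖c x‖ * (‖c y‖ * ‖(inner ℂ (g x) (g y) : ℂ)‖) := by
        rw [hhh]
        refine (norm_sum_le _ _).trans (Finset.sum_le_sum fun x _ => ?_)
        refine (norm_sum_le _ _).trans (Finset.sum_le_sum fun y _ => ?_)
        simp [norm_mul]
      have h3 : ∑ x ∈ s, ∑ y ∈ s, ‖c x‖ * (‖c y‖ * ‖(inner ℂ (g x) (g y) : ℂ)‖) ≤ M * S := by
        have hAM : ∀ x ∈ s, ∀ y ∈ s, ‖c x‖ * (‖c y‖ * ‖(inner ℂ (g x) (g y) : ℂ)‖)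
            ≤ (‖c x‖ ^ 2 + ‖c y‖ ^ 2) / 2 * ‖(inner ℂ (g x) (g y) : ℂ)‖ := by
          intro x _ y _
          have : ‖c x‖ * ‖c y‖ ≤ (‖c x‖ ^ 2 + ‖c y‖ ^ 2) / 2 := by nlinarith [sq_nonneg (‖c x‖ - ‖c y‖)]
          calc ‖c x‖ * (‖c y‖ * ‖(inner ℂ (g x) (g y) : ℂ)‖)
              = ‖c x‖ * ‖c y‖ * ‖(inner ℂ (g x) (g y) : ℂ)‖ := by ring
            _ ≤ _ := mul_le_mul_of_nonneg_right this (norm_nonneg _)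
        have split : ∑ x ∈ s, ∑ y ∈ s, (‖c x‖ ^ 2 + ‖c y‖ ^ 2) / 2 * ‖(inner ℂ (g x) (g y) : ℂ)‖
            = (∑ x ∈ s, ∑ y ∈ s, ‖c x‖ ^ 2 * ‖(inner ℂ (g x) (g y) : ℂ)‖
              + ∑ x ∈ s, ∑ y ∈ s, ‖c y‖ ^ 2 * ‖(inner ℂ (g x) (g y) : ℂ)‖) / 2 := by
          rw [← Finset.sum_add_distrib, Finset.sum_div]
          refine Finset.sum_congr rfl fun x _ => ?_
          rw [← Finset.sum_add_distrib, Finset.sum_div]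
          refine Finset.sum_congr rfl fun y _ => ?_
          ring
        have t1 : ∑ x ∈ s, ∑ y ∈ s, ‖c x‖ ^ 2 * ‖(inner ℂ (g x) (g y) : ℂ)‖ ≤ M * S := by
          calc ∑ x ∈ s, ∑ y ∈ s, ‖c x‖ ^ 2 * ‖(inner ℂ (g x) (g y) : ℂ)‖
              = ∑ x ∈ s, ‖c x‖ ^ 2 * ∑ y ∈ s, ‖(inner ℂ (g x) (g y) : ℂ)‖ := by
                simp [Finset.mul_sum]
            _ ≤ ∑ x ∈ s, ‖c x‖ ^ 2 * M :=
                Finset.sum_le_sum fun x _ => mul_le_mul_of_nonneg_left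
                  ((Summable.sum_le_tsum s (fun y _ => norm_nonneg _) (hrow x).1).trans (hrow x).2)
                  (sq_nonneg _)
            _ = M * S := by rw [← Finset.sum_mul, mul_comm]
        have t2 : ∑ x ∈ s, ∑ y ∈ s, ‖c y‖ ^ 2 * ‖(inner ℂ (g x) (g y) : ℂ)‖ ≤ M * S := by
          rw [Finset.sum_comm]
          calc ∑ y ∈ s, ∑ x ∈ s, ‖c y‖ ^ 2 * ‖(inner ℂ (g x) (g y) : ℂ)‖
              = ∑ y ∈ s, ‖c y‖ ^ 2 * ∑ x ∈ s, ‖(inner ℂ (g x) (g y) : ℂ)‖ := by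
                simp [Finset.mul_sum]
            _ ≤ ∑ y ∈ s, ‖c y‖ ^ 2 * M :=
                Finset.sum_le_sum fun y _ => mul_le_mul_of_nonneg_left
                  ((Summable.sum_le_tsum s (fun x _ => norm_nonneg _) (hcol y).1).trans (hcol y).2)
                  (sq_nonneg _)
            _ = M * S := by rw [← Finset.sum_mul, mul_comm]
        calc ∑ x ∈ s, ∑ y ∈ s, ‖c x‖ * (‖c y‖ * ‖(inner ℂ (g x) (g y) : ℂ)‖)
            ≤ ∑ x ∈ s, ∑ y ∈ s, (‖c x‖ ^ 2 + ‖c y‖ ^ 2) / 2 * ‖(inner ℂ (g x) (g y) : ℂ)‖ :=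
              Finset.sum_le_sum fun x hx => Finset.sum_le_sum fun y hy => hAM x hx y hy
          _ = _ := split
          _ ≤ M * S := by linarith
      linarith
    -- conclude S ≤ M * ‖f‖^2
    rcases hS0.eq_or_lt with h0 | hpos
    · rw [← h0]; positivity
    · have hsq : S ^ 2 ≤ ‖f‖ ^ 2 * (M * S) := by
        calc S ^ 2 ≤ (‖f‖ * ‖h‖) ^ 2 := by nlinarith [norm_nonneg h, norm_nonneg f]
          _ = ‖f‖ ^ 2 * ‖h‖ ^ 2 := by ring
          _ ≤ ‖f‖ ^ 2 * (M * S) := mul_le_mul_of_nonneg_left hnorm2 (sq_nonneg _)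
      nlinarith
  exact ⟨summable_of_sum_le (fun x => sq_nonneg _) key, Summable.tsum_le_of_sum_le
    (summable_of_sum_le (fun x => sq_nonneg _) key) key⟩



private lemma pert_schur {H : Type*} [NormedAddCommGroup H] [InnerProductSpace ℂ H]
    (g gt d : ℤ → H) (M ε : ℝ) (hM0 : 0 ≤ M) (hε0 : 0 ≤ ε) (f : H)
    (ha2 : Summable (fun x : ℤ => ‖(inner ℂ f (g x) : ℂ)‖ ^ 2))
    (haB : ∑' x : ℤ, ‖(inner ℂ f (g x) : ℂ)‖ ^ 2 ≤ M * ‖f‖ ^ 2)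
    (hdual : ∀ h : H, HasSum (fun x : ℤ => (inner ℂ h (gt x) : ℂ) • g x) h)
    (hrowp : ∀ n : ℤ, Summable (fun x : ℤ => ‖(inner ℂ (d n) (gt x) : ℂ)‖) ∧
      ∑' x : ℤ, ‖(inner ℂ (d n) (gt x) : ℂ)‖ ≤ ε)
    (hcolp : ∀ x : ℤ, Summable (fun n : ℤ => ‖(inner ℂ (d n) (gt x) : ℂ)‖) ∧
      ∑' n : ℤ, ‖(inner ℂ (d n) (gt x) : ℂ)‖ ≤ ε) :
    Summable (fun n : ℤ => ‖(inner ℂ f (d n) : ℂ)‖ ^ 2) ∧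
      ∑' n : ℤ, ‖(inner ℂ f (d n) : ℂ)‖ ^ 2 ≤ ε ^ 2 * (M * ‖f‖ ^ 2) := by
  set a : ℤ → ℂ := fun x => inner ℂ f (g x) with ha
  set c : ℤ → ℤ → ℂ := fun n x => inner ℂ (d n) (gt x) with hcdef
  set K : ℝ := Real.sqrt (M * ‖f‖ ^ 2) with hK
  have hK0 : 0 ≤ K := Real.sqrt_nonneg _
  have haK : ∀ x, ‖a x‖ ≤ K := by
    intro x
    have h1 : ‖a x‖ ^ 2 ≤ M * ‖f‖ ^ 2 :=
      le_trans (Summable.le_tsum ha2 x fun y _ => sq_nonneg _) haB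
    calc ‖a x‖ = Real.sqrt (‖a x‖ ^ 2) := (Real.sqrt_sq (norm_nonneg _)).symm
      _ ≤ K := Real.sqrt_le_sqrt h1
  -- representation of ⟪f, d n⟫
  have hrep : ∀ n, HasSum (fun x : ℤ => c n x * a x) (inner ℂ f (d n) : ℂ) := by
    intro n
    have h := (hdual (d n)).mapL (innerSL ℂ f)
    simpa [inner_smul_right] using h
  have hsca : ∀ n, Summable (fun x : ℤ => ‖c n x‖ * ‖a x‖) := by
    intro n
    refine Summable.of_nonneg_of_le (fun x => mul_nonneg (norm_nonneg _) (norm_nonneg _))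
      (fun x => ?_) ((hrowp n).1.mul_right K)
    exact mul_le_mul_of_nonneg_left (haK x) (norm_nonneg _)
  have hsca2 : ∀ n, Summable (fun x : ℤ => ‖c n x‖ * ‖a x‖ ^ 2) := by
    intro n
    refine Summable.of_nonneg_of_le (fun x => mul_nonneg (norm_nonneg _) (sq_nonneg _))
      (fun x => ?_) ((hrowp n).1.mul_right (K ^ 2))
    exact mul_le_mul_of_nonneg_left
      (pow_le_pow_left₀ (norm_nonneg _) (haK x) 2) (norm_nonneg _)
  have hdn : ∀ n, ‖(inner ℂ f (d n) : ℂ)‖ ≤ ∑' x, ‖c n x‖ * ‖a x‖ := by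
    intro n
    have hsn : Summable fun x => ‖c n x * a x‖ := by
      simpa [norm_mul] using hsca n
    have := norm_tsum_le_tsum_norm hsn
    rw [(hrep n).tsum_eq] at this
    simpa [norm_mul] using this
  set t : ℤ → ℝ := fun n => ∑' x, ‖c n x‖ * ‖a x‖ ^ 2 with htdef
  have ht0 : ∀ n, 0 ≤ t n := fun n => tsum_nonneg fun x => mul_nonneg (norm_nonneg _) (sq_nonneg _)
  -- Cauchy–Schwarz: (∑ ‖c‖‖a‖)² ≤ ε * t n
  have hsq : ∀ n, ‖(inner ℂ f (d n) : ℂ)‖ ^ 2 ≤ ε * t n := by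
    intro n
    have hu2 : Summable fun x : ℤ => Real.sqrt ‖c n x‖ ^ 2 := by
      have he : (fun x : ℤ => Real.sqrt ‖c n x‖ ^ 2) = fun x => ‖c n x‖ :=
        funext fun x => Real.sq_sqrt (norm_nonneg _)
      rw [he]; exact (hrowp n).1
    have hv2 : Summable fun x : ℤ => (Real.sqrt ‖c n x‖ * ‖a x‖) ^ 2 := by
      have he : (fun x : ℤ => (Real.sqrt ‖c n x‖ * ‖a x‖) ^ 2)
          = fun x => ‖c n x‖ * ‖a x‖ ^ 2 :=
        funext fun x => by rw [mul_pow, Real.sq_sqrt (norm_nonneg _)]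
      rw [he]; exact hsca2 n
    obtain ⟨_, hcs⟩ := cs_tsum (fun x => Real.sqrt_nonneg _)
      (fun x => mul_nonneg (Real.sqrt_nonneg _) (norm_nonneg _)) hu2 hv2
    have he1 : (fun x : ℤ => Real.sqrt ‖c n x‖ * (Real.sqrt ‖c n x‖ * ‖a x‖))
        = fun x => ‖c n x‖ * ‖a x‖ := funext fun x => by
      rw [← mul_assoc, Real.mul_self_sqrt (norm_nonneg _)]
    have he2 : (fun x : ℤ => Real.sqrt ‖c n x‖ ^ 2) = fun x => ‖c n x‖ :=
      funext fun x => Real.sq_sqrt (norm_nonneg _)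
    have he3 : (fun x : ℤ => (Real.sqrt ‖c n x‖ * ‖a x‖) ^ 2)
        = fun x => ‖c n x‖ * ‖a x‖ ^ 2 :=
      funext fun x => by rw [mul_pow, Real.sq_sqrt (norm_nonneg _)]
    rw [he1, he2, he3] at hcs
    -- hcs : ∑' ‖c‖‖a‖ ≤ √(∑'‖c‖) * √(t n)
    have h1 : ∑' x, ‖c n x‖ * ‖a x‖ ≤ Real.sqrt ε * Real.sqrt (t n) := by
      refine hcs.trans (mul_le_mul_of_nonneg_right ?_ (Real.sqrt_nonneg _))
      exact Real.sqrt_le_sqrt (hrowp n).2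
    have h2 : ‖(inner ℂ f (d n) : ℂ)‖ ≤ Real.sqrt ε * Real.sqrt (t n) := (hdn n).trans h1
    calc ‖(inner ℂ f (d n) : ℂ)‖ ^ 2 ≤ (Real.sqrt ε * Real.sqrt (t n)) ^ 2 :=
        pow_le_pow_left₀ (norm_nonneg _) h2 2
      _ = ε * t n := by
        rw [mul_pow, Real.sq_sqrt hε0, Real.sq_sqrt (ht0 n)]
  -- ∑ t ≤ ε * (M ‖f‖²)
  have keyt : ∀ s : Finset ℤ, ∑ n ∈ s, t n ≤ ε * (M * ‖f‖ ^ 2) := by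
    intro s
    have hswap : ∑ n ∈ s, t n = ∑' x, ∑ n ∈ s, ‖c n x‖ * ‖a x‖ ^ 2 :=
      (Summable.tsum_finsetSum fun n _ => hsca2 n).symm
    rw [hswap]
    have hle : ∀ x : ℤ, ∑ n ∈ s, ‖c n x‖ * ‖a x‖ ^ 2 ≤ ε * ‖a x‖ ^ 2 := by
      intro x
      rw [← Finset.sum_mul]
      exact mul_le_mul_of_nonneg_right
        ((Summable.sum_le_tsum s (fun n _ => norm_nonneg _) (hcolp x).1).trans (hcolp x).2)
        (sq_nonneg _)
    calc ∑' x, ∑ n ∈ s, ‖c n x‖ * ‖a x‖ ^ 2 ≤ ∑' x, ε * ‖a x‖ ^ 2 :=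
        Summable.tsum_le_tsum hle (summable_sum fun n _ => hsca2 n) (ha2.mul_left ε)
      _ = ε * ∑' x, ‖a x‖ ^ 2 := tsum_mul_left
      _ ≤ ε * (M * ‖f‖ ^ 2) := mul_le_mul_of_nonneg_left haB hε0
  have htsum : Summable t := summable_of_sum_le ht0 keyt
  have hsum2 : Summable (fun n : ℤ => ‖(inner ℂ f (d n) : ℂ)‖ ^ 2) :=
    Summable.of_nonneg_of_le (fun n => sq_nonneg _) hsq (htsum.mul_left ε)
  refine ⟨hsum2, ?_⟩
  calc ∑' n, ‖(inner ℂ f (d n) : ℂ)‖ ^ 2 ≤ ∑' n, ε * t n :=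
      Summable.tsum_le_tsum hsq hsum2 (htsum.mul_left ε)
    _ = ε * ∑' n, t n := tsum_mul_left
    _ ≤ ε * (ε * (M * ‖f‖ ^ 2)) :=
      mul_le_mul_of_nonneg_left (Summable.tsum_le_of_sum_le htsum keyt) hε0
    _ = ε ^ 2 * (M * ‖f‖ ^ 2) := by ring





/-- Proposition 3.5: cross-Gramian localization perturbation criterion. -/
theorem stmt_10 {H : Type*} [NormedAddCommGroup H] [InnerProductSpace ℂ H] [CompleteSpace H]
    (g gt F E : ℤ → H) (A B M ε : ℝ) (hA : 0 < A) (hAB : A ≤ B)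
    (hframe : ∀ f : H,
      A * ‖f‖ ^ 2 ≤ ∑' n : ℤ, ‖(inner ℂ f (F n) : ℂ)‖ ^ 2 ∧
      ∑' n : ℤ, ‖(inner ℂ f (F n) : ℂ)‖ ^ 2 ≤ B * ‖f‖ ^ 2)
    (hGram_row : ∀ x : ℤ, Summable (fun y : ℤ => ‖(inner ℂ (g x) (g y) : ℂ)‖) ∧
      ∑' y : ℤ, ‖(inner ℂ (g x) (g y) : ℂ)‖ ≤ M)
    (hGram_col : ∀ y : ℤ, Summable (fun x : ℤ => ‖(inner ℂ (g x) (g y) : ℂ)‖) ∧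
      ∑' x : ℤ, ‖(inner ℂ (g x) (g y) : ℂ)‖ ≤ M)
    (hdual : ∀ h : H, HasSum (fun x : ℤ => (inner ℂ h (gt x) : ℂ) • g x) h)
    (hpert_row : ∀ n : ℤ, Summable (fun x : ℤ => ‖(inner ℂ (E n - F n) (gt x) : ℂ)‖) ∧
      ∑' x : ℤ, ‖(inner ℂ (E n - F n) (gt x) : ℂ)‖ ≤ ε)
    (hpert_col : ∀ x : ℤ, Summable (fun n : ℤ => ‖(inner ℂ (E n - F n) (gt x) : ℂ)‖) ∧
      ∑' n : ℤ, ‖(inner ℂ (E n - F n) (gt x) : ℂ)‖ ≤ ε)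
    (hε0 : 0 < ε) (hεsmall : ε < (Real.sqrt (A⁻¹ * M))⁻¹) :
    ∀ f : H,
      A * (1 - Real.sqrt (A⁻¹ * M) * ε) ^ 2 * ‖f‖ ^ 2 ≤
        ∑' n : ℤ, ‖(inner ℂ f (E n) : ℂ)‖ ^ 2 ∧
      ∑' n : ℤ, ‖(inner ℂ f (E n) : ℂ)‖ ^ 2 ≤
        B * (1 + Real.sqrt (B⁻¹ * M) * ε) ^ 2 * ‖f‖ ^ 2 := by
  have hM0 : 0 ≤ M := le_trans (tsum_nonneg fun y => norm_nonneg _) (hGram_row 0).2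
  have hMpos : 0 < M := by
    rcases hM0.eq_or_lt with h | h
    · exfalso
      rw [← h] at hεsmall
      simp at hεsmall
      linarith
    · exact h
  have hB0 : (0:ℝ) < B := lt_of_lt_of_le hA hAB
  have hsA : (0:ℝ) < Real.sqrt A := Real.sqrt_pos.2 hA
  have hsB : (0:ℝ) < Real.sqrt B := Real.sqrt_pos.2 hB0
  have hsM : (0:ℝ) < Real.sqrt M := Real.sqrt_pos.2 hMpos
  have hsqA : Real.sqrt (A⁻¹ * M) = Real.sqrt M / Real.sqrt A := by
    rw [Real.sqrt_mul (by positivity) M, Real.sqrt_inv]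
    ring
  have hsqB : Real.sqrt (B⁻¹ * M) = Real.sqrt M / Real.sqrt B := by
    rw [Real.sqrt_mul (by positivity) M, Real.sqrt_inv]
    ring
  have hεM : Real.sqrt M * ε < Real.sqrt A := by
    rw [hsqA, inv_div] at hεsmall
    calc Real.sqrt M * ε < Real.sqrt M * (Real.sqrt A / Real.sqrt M) := by
          exact mul_lt_mul_of_pos_left hεsmall hsM
      _ = Real.sqrt A := by field_simp
  intro f
  rcases eq_or_ne f 0 with rfl | hf0
  · simp
  have hfpos : (0:ℝ) < ‖f‖ := norm_pos_iff.2 hf0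
  obtain ⟨hFlow, hFup⟩ := hframe f
  set aF : ℤ → ℝ := fun n => ‖(inner ℂ f (F n) : ℂ)‖ with haF
  set dd : ℤ → ℝ := fun n => ‖(inner ℂ f (E n - F n) : ℂ)‖ with hdd
  set ee : ℤ → ℝ := fun n => ‖(inner ℂ f (E n) : ℂ)‖ with hee
  have hsumF : Summable (fun n => aF n ^ 2) := by
    by_contra hns
    rw [tsum_eq_zero_of_not_summable hns] at hFlow
    nlinarith [mul_pos hA (pow_pos hfpos 2)]
  obtain ⟨hbs, hbb⟩ := bessel_schur g M hGram_row hGram_col f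
  obtain ⟨hsumD, hDbound⟩ := pert_schur g gt (fun n => E n - F n) M ε hM0 hε0.le f hbs hbb
    hdual hpert_row hpert_col
  have hDs : Real.sqrt (∑' n, dd n ^ 2) ≤ Real.sqrt M * ε * ‖f‖ := by
    have h1 : Real.sqrt (∑' n, dd n ^ 2) ≤ Real.sqrt (ε ^ 2 * (M * ‖f‖ ^ 2)) :=
      Real.sqrt_le_sqrt hDbound
    have h2 : Real.sqrt (ε ^ 2 * (M * ‖f‖ ^ 2)) = Real.sqrt M * ε * ‖f‖ := by
      rw [Real.sqrt_mul (sq_nonneg ε), Real.sqrt_sq hε0.le,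
        Real.sqrt_mul hM0, Real.sqrt_sq (norm_nonneg f)]
      ring
    rw [h2] at h1
    exact h1
  have hEeq : ∀ n, (inner ℂ f (E n) : ℂ) = inner ℂ f (F n) + inner ℂ f (E n - F n) := by
    intro n
    rw [← inner_add_right]
    congr 1
    abel
  have hFeq : ∀ n, (inner ℂ f (F n) : ℂ) = inner ℂ f (E n) - inner ℂ f (E n - F n) := by
    intro n
    rw [← inner_sub_right]
    congr 1
    abel
  have hEF : ∀ n, ee n ≤ aF n + dd n := by
    intro n
    simp only [hee, haF, hdd, hEeq n]
    exact norm_add_le _ _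
  have hFE : ∀ n, aF n ≤ ee n + dd n := by
    intro n
    simp only [hee, haF, hdd, hFeq n]
    exact norm_sub_le _ _
  obtain ⟨hsumFD, hminkFD⟩ := mink_tsum (u := aF) (v := dd)
    (fun n => norm_nonneg _) (fun n => norm_nonneg _) hsumF hsumD
  have hsumE : Summable (fun n => ee n ^ 2) :=
    Summable.of_nonneg_of_le (fun n => sq_nonneg _)
      (fun n => pow_le_pow_left₀ (norm_nonneg _) (hEF n) 2) hsumFD
  have hE0 : (0:ℝ) ≤ ∑' n, ee n ^ 2 := tsum_nonneg fun n => sq_nonneg _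
  -- upper bound
  have hEup : Real.sqrt (∑' n, ee n ^ 2) ≤ Real.sqrt B * ‖f‖ + Real.sqrt M * ε * ‖f‖ := by
    have h1 : Real.sqrt (∑' n, ee n ^ 2) ≤ Real.sqrt (∑' n, (aF n + dd n) ^ 2) :=
      Real.sqrt_le_sqrt (Summable.tsum_le_tsum
        (fun n => pow_le_pow_left₀ (norm_nonneg _) (hEF n) 2) hsumE hsumFD)
    have h2 : Real.sqrt (∑' n, aF n ^ 2) ≤ Real.sqrt B * ‖f‖ := by
      have := Real.sqrt_le_sqrt hFup
      rwa [Real.sqrt_mul hB0.le, Real.sqrt_sq (norm_nonneg f)] at this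
    calc Real.sqrt (∑' n, ee n ^ 2) ≤ Real.sqrt (∑' n, (aF n + dd n) ^ 2) := h1
      _ ≤ Real.sqrt (∑' n, aF n ^ 2) + Real.sqrt (∑' n, dd n ^ 2) := hminkFD
      _ ≤ Real.sqrt B * ‖f‖ + Real.sqrt M * ε * ‖f‖ := add_le_add h2 hDs
  -- lower bound
  obtain ⟨hsumED, hminkED⟩ := mink_tsum (u := ee) (v := dd)
    (fun n => norm_nonneg _) (fun n => norm_nonneg _) hsumE hsumD
  have hElow : (Real.sqrt A - Real.sqrt M * ε) * ‖f‖ ≤ Real.sqrt (∑' n, ee n ^ 2) := by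
    have h1 : Real.sqrt A * ‖f‖ ≤ Real.sqrt (∑' n, aF n ^ 2) := by
      have := Real.sqrt_le_sqrt hFlow
      rwa [Real.sqrt_mul hA.le, Real.sqrt_sq (norm_nonneg f)] at this
    have h2 : Real.sqrt (∑' n, aF n ^ 2) ≤ Real.sqrt (∑' n, (ee n + dd n) ^ 2) :=
      Real.sqrt_le_sqrt (Summable.tsum_le_tsum
        (fun n => pow_le_pow_left₀ (norm_nonneg _) (hFE n) 2) hsumF hsumED)
    have h3 := hminkED
    nlinarith [hDs]
  constructor
  · have hnn : (0:ℝ) ≤ (Real.sqrt A - Real.sqrt M * ε) * ‖f‖ := by nlinarith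
    have hsq := pow_le_pow_left₀ hnn hElow 2
    rw [Real.sq_sqrt hE0] at hsq
    have halg : A * (1 - Real.sqrt (A⁻¹ * M) * ε) ^ 2 * ‖f‖ ^ 2
        = ((Real.sqrt A - Real.sqrt M * ε) * ‖f‖) ^ 2 := by
      rw [hsqA]
      nth_rewrite 1 [← Real.sq_sqrt hA.le]
      field_simp
    rw [halg]
    exact hsq
  · have hnn : (0:ℝ) ≤ Real.sqrt B * ‖f‖ + Real.sqrt M * ε * ‖f‖ := by positivity
    have hsq := pow_le_pow_left₀ (Real.sqrt_nonneg _) hEup 2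
    rw [Real.sq_sqrt hE0] at hsq
    have halg : B * (1 + Real.sqrt (B⁻¹ * M) * ε) ^ 2 * ‖f‖ ^ 2
        = (Real.sqrt B * ‖f‖ + Real.sqrt M * ε * ‖f‖) ^ 2 := by
      rw [hsqB]
      nth_rewrite 1 [← Real.sq_sqrt hB0.le]
      field_simp
    rw [halg]
    exact hsq
end

section
/- Let {f_n} be a frame atomic decomposition for a Banach space X with bounds A_p, B_p (i.e., A_p‖f‖ ≤ ‖(⟨f, f̃_n⟩)‖_{ℓ^p} ≤ B_p‖f‖ and f = Σ_n ⟨f, f̃_n⟩ f_n unconditionally), and suppose E = {e_n} satisfies ‖Σ_n c_n (e_n − f_n)‖_X ≤ ε‖c‖_{ℓ^p} for all finitely supported c, with ε B_p < 1. Then E is a frame atomic decomposition for X with bounds A_p(1 + ε B_p)⁻¹ and B_p(1 − ε B_p)⁻¹. -/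
open Filter Topology

/-- Banach-space perturbation of frame atomic decompositions ([CH, Theorem 2.3]). -/
theorem stmt_16 {X : Type*} [NormedAddCommGroup X] [NormedSpace ℂ X] [CompleteSpace X]
    (f e : ℤ → X) (ft : ℤ → (X →L[ℂ] ℂ)) (p Ap Bp ε : ℝ)
    (hp : 1 ≤ p) (hAp : 0 < Ap) (hBp : 0 < Bp) (hε : 0 < ε)
    (hexp : ∀ x : X, HasSum (fun n : ℤ => ft n x • f n) x)
    (hnorm : ∀ x : X,
      Ap * ‖x‖ ≤ (∑' n : ℤ, ‖ft n x‖ ^ p) ^ (1 / p) ∧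
      (∑' n : ℤ, ‖ft n x‖ ^ p) ^ (1 / p) ≤ Bp * ‖x‖)
    (hpert : ∀ (F₀ : Finset ℤ) (c : ℤ → ℂ),
      ‖∑ n ∈ F₀, c n • (e n - f n)‖ ≤ ε * (∑ n ∈ F₀, ‖c n‖ ^ p) ^ (1 / p))
    (hsmall : ε * Bp < 1) :
    ∃ et : ℤ → (X →L[ℂ] ℂ),
      (∀ x : X, HasSum (fun n : ℤ => et n x • e n) x) ∧
      ∀ x : X,
        Ap * (1 + ε * Bp)⁻¹ * ‖x‖ ≤ (∑' n : ℤ, ‖et n x‖ ^ p) ^ (1 / p) ∧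
        (∑' n : ℤ, ‖et n x‖ ^ p) ^ (1 / p) ≤ Bp * (1 - ε * Bp)⁻¹ * ‖x‖ := by
  have hp0 : (0:ℝ) < p := lt_of_lt_of_le one_pos hp
  have hpne : p ≠ 0 := ne_of_gt hp0
  -- summability of the coefficient p-powers
  have hsum : ∀ x : X, Summable (fun n : ℤ => ‖ft n x‖ ^ p) := by
    intro x
    by_cases hx : x = 0
    · subst hx
      simpa [Real.zero_rpow hpne] using (summable_zero : Summable (fun _ : ℤ => (0:ℝ)))
    · by_contra hns
      have h0 : (∑' n : ℤ, ‖ft n x‖ ^ p) = 0 := tsum_eq_zero_of_not_summable hns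
      have h1 := (hnorm x).1
      rw [h0, Real.zero_rpow (by positivity : 1/p ≠ 0)] at h1
      have : (0:ℝ) < Ap * ‖x‖ := mul_pos hAp (norm_pos_iff.mpr hx)
      linarith
  -- summability of the perturbation series
  set g : X → ℤ → X := fun x n => ft n x • (e n - f n) with hg_def
  have hg : ∀ x : X, Summable (g x) := by
    intro x
    rw [summable_iff_vanishing]
    intro V hV
    obtain ⟨δ, hδ, hball⟩ := Metric.mem_nhds_iff.mp hV
    have hηpos : (0:ℝ) < (δ / (2 * ε)) ^ p := by positivity
    obtain ⟨s, hs⟩ := summable_iff_vanishing.mp (hsum x) (Metric.ball 0 ((δ / (2*ε)) ^ p))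
      (Metric.ball_mem_nhds _ hηpos)
    refine ⟨s, fun t ht => ?_⟩
    have h2 : ∑ n ∈ t, ‖ft n x‖ ^ p < (δ / (2*ε)) ^ p := by
      have := hs t ht
      rw [Metric.mem_ball, dist_zero_right, Real.norm_eq_abs] at this
      exact lt_of_le_of_lt (le_abs_self _) this
    apply hball
    rw [Metric.mem_ball, dist_zero_right]
    have hnonneg : (0:ℝ) ≤ ∑ n ∈ t, ‖ft n x‖ ^ p :=
      Finset.sum_nonneg fun n _ => by positivity
    calc ‖∑ n ∈ t, g x n‖ ≤ ε * (∑ n ∈ t, ‖ft n x‖ ^ p) ^ (1/p) := hpert t _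
      _ < ε * ((δ / (2*ε)) ^ p) ^ (1/p) := by
          apply mul_lt_mul_of_pos_left _ hε
          exact Real.rpow_lt_rpow hnonneg h2 (by positivity)
      _ = δ / 2 := by
          rw [one_div, Real.rpow_rpow_inv (by positivity) hpne]
          field_simp
      _ < δ := by linarith
  -- norm bound on the tsum of g
  have htsum_bound : ∀ x : X, ‖∑' n, g x n‖ ≤ ε * Bp * ‖x‖ := by
    intro x
    have hS : HasSum (g x) (∑' n, g x n) := (hg x).hasSum
    refine le_of_tendsto' hS.norm (fun F => ?_)
    calc ‖∑ n ∈ F, g x n‖ ≤ ε * (∑ n ∈ F, ‖ft n x‖ ^ p) ^ (1/p) := hpert F _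
      _ ≤ ε * (∑' n : ℤ, ‖ft n x‖ ^ p) ^ (1/p) := by
          apply mul_le_mul_of_nonneg_left _ (le_of_lt hε)
          apply Real.rpow_le_rpow (Finset.sum_nonneg fun n _ => by positivity)
            (Summable.sum_le_tsum F (fun n _ => by positivity) (hsum x)) (by positivity)
      _ ≤ ε * (Bp * ‖x‖) := mul_le_mul_of_nonneg_left (hnorm x).2 (le_of_lt hε)
      _ = ε * Bp * ‖x‖ := by ring
  -- the operator T
  have hgadd : ∀ x y : X, g (x + y) = fun n => g x n + g y n := by
    intro x y; funext n; simp [hg_def, add_smul]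
  have hgsmul : ∀ (c : ℂ) (x : X), g (c • x) = fun n => c • g x n := by
    intro c x; funext n; simp [hg_def, smul_smul]
  set T₀ : X →ₗ[ℂ] X :=
    { toFun := fun x => x + ∑' n, g x n
      map_add' := by
        intro x y
        have := Summable.tsum_add (hg x) (hg y)
        simp only [hgadd x y] at *
        rw [this]; abel
      map_smul' := by
        intro c x
        simp only [RingHom.id_apply, hgsmul c x]
        rw [Summable.tsum_const_smul c (hg x), smul_add] } with hT₀
  have hT₀_apply : ∀ x, T₀ x = x + ∑' n, g x n := fun _ => rfl
  have hTb : ∀ x : X, ‖T₀ x‖ ≤ (1 + ε * Bp) * ‖x‖ := by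
    intro x
    calc ‖T₀ x‖ ≤ ‖x‖ + ‖∑' n, g x n‖ := norm_add_le _ _
      _ ≤ ‖x‖ + ε * Bp * ‖x‖ := by linarith [htsum_bound x]
      _ = (1 + ε * Bp) * ‖x‖ := by ring
  set S : X →L[ℂ] X := LinearMap.mkContinuous T₀ (1 + ε * Bp) hTb with hS_def
  have hS_apply : ∀ x, S x = x + ∑' n, g x n := fun _ => rfl
  have hεBp : (0:ℝ) ≤ ε * Bp := by positivity
  have hlt : ‖(1 : X →L[ℂ] X) - S‖ < 1 := by
    refine lt_of_le_of_lt (ContinuousLinearMap.opNorm_le_bound _ hεBp fun x => ?_) hsmall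
    have : ((1 : X →L[ℂ] X) - S) x = -(∑' n, g x n) := by
      simp [ContinuousLinearMap.sub_apply, hS_apply x]
    rw [this, norm_neg]
    exact htsum_bound x
  set u : (X →L[ℂ] X)ˣ := Units.oneSub ((1 : X →L[ℂ] X) - S) hlt with hu_def
  have hu_val : (u : X →L[ℂ] X) = S := sub_sub_cancel 1 S
  set Ti : X →L[ℂ] X := ((u⁻¹ : (X →L[ℂ] X)ˣ) : X →L[ℂ] X) with hTi
  have hST : ∀ x : X, S (Ti x) = x := by
    intro x
    have : (u : X →L[ℂ] X) * Ti = 1 := by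
      rw [hTi]; exact_mod_cast u.mul_inv
    calc S (Ti x) = ((u : X →L[ℂ] X) * Ti) x := by rw [hu_val]; rfl
      _ = x := by rw [this]; rfl
  -- norm bounds on Ti
  have hS_lower : ∀ x : X, (1 - ε * Bp) * ‖x‖ ≤ ‖S x‖ := by
    intro x
    have h1 : ‖x - S x‖ ≤ ε * Bp * ‖x‖ := by
      have : x - S x = -(∑' n, g x n) := by rw [hS_apply x]; abel
      rw [this, norm_neg]; exact htsum_bound x
    have h2 : ‖x‖ ≤ ‖S x‖ + ‖x - S x‖ := by
      have hx : S x + (x - S x) = x := by abel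
      calc ‖x‖ = ‖S x + (x - S x)‖ := by rw [hx]
        _ ≤ ‖S x‖ + ‖x - S x‖ := norm_add_le _ _
    linarith
  have hTi_le : ∀ x : X, ‖Ti x‖ ≤ (1 - ε * Bp)⁻¹ * ‖x‖ := by
    intro x
    have h1 := hS_lower (Ti x)
    rw [hST x] at h1
    have hpos : (0:ℝ) < 1 - ε * Bp := by linarith
    calc ‖Ti x‖ = (1 - ε * Bp)⁻¹ * ((1 - ε * Bp) * ‖Ti x‖) := by
          rw [inv_mul_cancel_left₀ (ne_of_gt hpos)]
      _ ≤ (1 - ε * Bp)⁻¹ * ‖x‖ :=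
          mul_le_mul_of_nonneg_left h1 (le_of_lt (inv_pos.mpr hpos))
  have hTi_ge : ∀ x : X, (1 + ε * Bp)⁻¹ * ‖x‖ ≤ ‖Ti x‖ := by
    intro x
    have h1 : ‖x‖ ≤ (1 + ε * Bp) * ‖Ti x‖ := by
      have := hTb (Ti x)
      rw [show T₀ (Ti x) = S (Ti x) from rfl, hST x] at this
      exact this
    have hpos : (0:ℝ) < 1 + ε * Bp := by positivity
    rw [inv_mul_le_iff₀ hpos]
    exact h1
  refine ⟨fun n => (ft n).comp Ti, fun x => ?_, fun x => ?_⟩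
  · -- HasSum
    have h1 := hexp (Ti x)
    have h2 : HasSum (g (Ti x)) (∑' n, g (Ti x) n) := (hg (Ti x)).hasSum
    have h3 := h1.add h2
    have h4 : (fun n => ft n (Ti x) • f n + g (Ti x) n) = fun n => ft n (Ti x) • e n := by
      funext n; simp [hg_def, smul_sub]
    rw [h4] at h3
    have h5 : Ti x + ∑' n, g (Ti x) n = x := by
      rw [← hS_apply (Ti x), hST x]
    rw [h5] at h3
    exact h3
  · -- norm bounds
    have hn := hnorm (Ti x)
    constructor
    · calc Ap * (1 + ε * Bp)⁻¹ * ‖x‖ ≤ Ap * ‖Ti x‖ := by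
            rw [mul_assoc]
            exact mul_le_mul_of_nonneg_left (hTi_ge x) (le_of_lt hAp)
        _ ≤ (∑' n : ℤ, ‖ft n (Ti x)‖ ^ p) ^ (1/p) := hn.1
        _ = (∑' n : ℤ, ‖((ft n).comp Ti) x‖ ^ p) ^ (1/p) := rfl
    · calc (∑' n : ℤ, ‖((ft n).comp Ti) x‖ ^ p) ^ (1/p)
          = (∑' n : ℤ, ‖ft n (Ti x)‖ ^ p) ^ (1/p) := rfl
        _ ≤ Bp * ‖Ti x‖ := hn.2
        _ ≤ Bp * ((1 - ε * Bp)⁻¹ * ‖x‖) := mul_le_mul_of_nonneg_left (hTi_le x) (le_of_lt hBp)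
        _ = Bp * (1 - ε * Bp)⁻¹ * ‖x‖ := by ring
end
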